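/- arXiv:1708.02028 — 7 statements merged into one kernel-verified Lean document; each statement's English description precedes it below -/
import Mathlib

section
/- Let G be a graph with maximum degree at most d. For every edge xy of G, the number c_G(xy) of edges of G at line-graph distance at most 2 from xy (including xy itself) satisfies c_G(xy) ≤ 2d² − 2d + 1 − (d·n_{xy} + m_{xy}), where n_{xy} = |N_G(x) ∩ N_G(y)| and m_{xy} is the number of edges of G with both endpoints in (N_G(x) ∪ N_G(y)) \ {x, y}. -/
open Classical

variable {V : Type*}

/-- Two edges (as `Sym2 V`) are in conflict: they are at distance at most 2
in the line graph, i.e. they share a vertex or some edge of `G` joins them. -/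
def Conflict (G : SimpleGraph V) (e f : Sym2 V) : Prop :=
  ∃ a ∈ e, ∃ b ∈ f, a = b ∨ G.Adj a b

/-- `C_G(e)`: the set of edges of `G` in conflict with `e` (including `e`). -/
def CSet (G : SimpleGraph V) (e : Sym2 V) : Set (Sym2 V) :=
  {f | f ∈ G.edgeSet ∧ Conflict G e f}

/-- `PC_G(M, e)`: the private conflict edges of `e` with respect to `M`. -/
def PCSet (G : SimpleGraph V) (M : Set (Sym2 V)) (e : Sym2 V) : Set (Sym2 V) :=
  CSet G e \ ⋃ f ∈ M \ {e}, CSet G f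

/-- `M` is an induced matching of `G`. -/
def IsInducedMatching (G : SimpleGraph V) (M : Set (Sym2 V)) : Prop :=
  M ⊆ G.edgeSet ∧ ∀ e ∈ M, ∀ f ∈ M, e ≠ f → ¬ Conflict G e f

/-- `M` is a maximal induced matching of `G`. -/
def IsMaximalInducedMatching (G : SimpleGraph V) (M : Set (Sym2 V)) : Prop :=
  IsInducedMatching G M ∧ ∀ M', IsInducedMatching G M' → M ⊆ M' → M' = M

/-- `M` is stable under the local-search exchange operation: any two distinct
private conflict edges of an edge of `M` conflict with each other. -/
def LSStable (G : SimpleGraph V) (M : Set (Sym2 V)) : Prop :=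
  ∀ e ∈ M, ∀ e' ∈ PCSet G M e, ∀ e'' ∈ PCSet G M e, e' ≠ e'' → e'' ∈ CSet G e'

/-- The edges of `G` with both endpoints in `S`. -/
def edgesWithin (G : SimpleGraph V) (S : Set V) : Set (Sym2 V) :=
  {e | e ∈ G.edgeSet ∧ ∀ a ∈ e, a ∈ S}

/-- The edges of `G` with one endpoint in `S` and the other in `T`. -/
def edgesBetween (G : SimpleGraph V) (S T : Set V) : Set (Sym2 V) :=
  {e | e ∈ G.edgeSet ∧ ∃ a b : V, e = s(a, b) ∧ a ∈ S ∧ b ∈ T}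

/-- `G` has no induced cycle of length 4. -/
def C4Free (G : SimpleGraph V) : Prop :=
  ¬ ∃ a b c d : V, G.Adj a b ∧ G.Adj b c ∧ G.Adj c d ∧ G.Adj d a ∧
      ¬ G.Adj a c ∧ ¬ G.Adj b d ∧ a ≠ c ∧ b ≠ d

/-- `G` has no induced cycle of length 5. -/
def C5Free (G : SimpleGraph V) : Prop :=
  ¬ ∃ a b c d e : V, G.Adj a b ∧ G.Adj b c ∧ G.Adj c d ∧ G.Adj d e ∧ G.Adj e a ∧
      ¬ G.Adj a c ∧ ¬ G.Adj a d ∧ ¬ G.Adj b d ∧ ¬ G.Adj b e ∧ ¬ G.Adj c e ∧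
      a ≠ c ∧ a ≠ d ∧ b ≠ d ∧ b ≠ e ∧ c ≠ e

/-- `G` has no induced `K_{1,3}` (claw). -/
def ClawFree (G : SimpleGraph V) : Prop :=
  ¬ ∃ v a b c : V, G.Adj v a ∧ G.Adj v b ∧ G.Adj v c ∧
      ¬ G.Adj a b ∧ ¬ G.Adj a c ∧ ¬ G.Adj b c ∧ a ≠ b ∧ a ≠ c ∧ b ≠ c

/-- upper bound on the number of conflict edges of an edge `xy`. -/
theorem stmt0 [Fintype V] (G : SimpleGraph V) (d : ℕ) (hd : 3 ≤ d)
    (hΔ : ∀ v : V, (G.neighborSet v).ncard ≤ d) (x y : V) (hxy : G.Adj x y) :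
    ((CSet G s(x, y)).ncard : ℤ) ≤
      2 * (d : ℤ) ^ 2 - 2 * d + 1 -
        ((d : ℤ) * ((G.neighborSet x ∩ G.neighborSet y).ncard : ℤ) +
          ((edgesWithin G ((G.neighborSet x ∪ G.neighborSet y) \ {x, y})).ncard : ℤ)) := by
  classical
  -- the vertex set S = N(x) ∪ N(y)
  set S : Finset V := G.neighborFinset x ∪ G.neighborFinset y with hSdef
  have hmemS : ∀ v, v ∈ S ↔ G.Adj x v ∨ G.Adj y v := by
    intro v; simp [hSdef, SimpleGraph.mem_neighborFinset]
  have hxS : x ∈ S := (hmemS x).2 (Or.inr hxy.symm)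
  have hyS : y ∈ S := (hmemS y).2 (Or.inl hxy)
  -- the conflict set as a finset
  have hCfin : (CSet G s(x, y)).Finite := Set.toFinite _
  set Cf : Finset (Sym2 V) := hCfin.toFinset with hCfdef
  have hCmem : ∀ f, f ∈ Cf ↔ f ∈ G.edgeSet ∧ ∃ b ∈ f, b ∈ S := by
    intro f
    rw [hCfdef, Set.Finite.mem_toFinset]
    constructor
    · rintro ⟨hf, a, ha, b, hb, hab⟩
      refine ⟨hf, b, hb, (hmemS b).2 ?_⟩
      rw [Sym2.mem_iff] at ha
      rcases ha with rfl | rfl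
      · rcases hab with rfl | h
        · exact Or.inr hxy.symm
        · exact Or.inl h
      · rcases hab with rfl | h
        · exact Or.inl hxy
        · exact Or.inr h
    · rintro ⟨hf, b, hb, hbS⟩
      refine ⟨hf, ?_⟩
      rcases (hmemS b).1 hbS with h | h
      · exact ⟨x, by simp, b, hb, Or.inr h⟩
      · exact ⟨y, by simp, b, hb, Or.inr h⟩
  -- pairs (v, w) with v ∈ S and Adj v w
  set P : Finset (V × V) := Finset.univ.filter (fun p : V × V => p.1 ∈ S ∧ G.Adj p.1 p.2)
    with hPdef
  have hPmem : ∀ p : V × V, p ∈ P ↔ p.1 ∈ S ∧ G.Adj p.1 p.2 := by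
    intro p; simp [hPdef]
  -- degrees
  have hdeg : ∀ v : V, (G.neighborFinset v).card ≤ d := by
    intro v
    rw [SimpleGraph.neighborFinset_def, ← Set.ncard_eq_toFinset_card']
    exact hΔ v
  -- |P| ≤ d * |S|
  have hP1 : P.card ≤ S.card * d := by
    rw [Finset.card_eq_sum_card_fiberwise (f := Prod.fst) (t := S)
      (fun p hp => ((hPmem p).1 hp).1)]
    refine le_trans (Finset.sum_le_card_nsmul _ _ d ?_) (by simp [smul_eq_mul])
    intro v _
    refine (Finset.card_le_card_of_injOn Prod.snd ?_ ?_).trans (hdeg v)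
    · rintro ⟨a, b⟩ hp
      simp only [Finset.mem_coe, Finset.mem_filter] at hp
      rcases hp with ⟨hp, rfl⟩
      exact SimpleGraph.mem_neighborFinset _ _ _ |>.2 ((hPmem _).1 hp).2
    · rintro ⟨a, b⟩ hp ⟨a', b'⟩ hp' h
      simp only [Finset.mem_coe, Finset.mem_filter] at hp hp'
      exact Prod.ext (hp.2.trans hp'.2.symm) h
  -- fiberwise count over edges
  have hP2 : P.card = ∑ e ∈ Cf, (P.filter (fun p => s(p.1, p.2) = e)).card := by
    refine Finset.card_eq_sum_card_fiberwise ?_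
    intro p hp
    rcases (hPmem p).1 hp with ⟨h1, h2⟩
    exact (hCmem _).2 ⟨h2, p.1, Sym2.mem_mk_left _ _, h1⟩
  -- edges with both endpoints in S
  set Wf : Finset (Sym2 V) := Cf.filter (fun e => ∀ a ∈ e, a ∈ S) with hWfdef
  have hfib1 : ∀ e ∈ Cf, 1 ≤ (P.filter (fun p => s(p.1, p.2) = e)).card := by
    intro e he
    rcases (hCmem e).1 he with ⟨hE, b, hb, hbS⟩
    rcases Sym2.mem_iff_exists.1 hb with ⟨c, rfl⟩
    refine Finset.card_pos.2 ⟨(b, c), ?_⟩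
    refine Finset.mem_filter.2 ⟨(hPmem _).2 ⟨hbS, hE⟩, rfl⟩
  have hfib2 : ∀ e ∈ Wf, 2 ≤ (P.filter (fun p => s(p.1, p.2) = e)).card := by
    intro e he
    rw [hWfdef, Finset.mem_filter] at he
    rcases he with ⟨heC, hin⟩
    rcases (hCmem e).1 heC with ⟨hE, -⟩
    induction e using Sym2.ind with
    | _ a b =>
      rw [SimpleGraph.mem_edgeSet] at hE
      have haS : a ∈ S := hin a (by simp)
      have hbS : b ∈ S := hin b (by simp)
      have hab : a ≠ b := hE.ne
      refine Finset.one_lt_card.2 ⟨(a, b), ?_, (b, a), ?_, ?_⟩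
      · exact Finset.mem_filter.2 ⟨(hPmem _).2 ⟨haS, hE⟩, rfl⟩
      · exact Finset.mem_filter.2 ⟨(hPmem _).2 ⟨hbS, hE.symm⟩, Sym2.eq_swap⟩
      · simp [hab]
  -- |Cf| + |Wf| ≤ |P|
  have hCW : Cf.card + Wf.card ≤ P.card := by
    rw [hP2]
    have hsplit := Finset.sum_filter_add_sum_filter_not Cf (fun e => ∀ a ∈ e, a ∈ S)
      (fun e => (P.filter (fun p => s(p.1, p.2) = e)).card)
    rw [← hWfdef] at hsplit
    have h1 : 2 * Wf.card ≤ ∑ e ∈ Wf, (P.filter (fun p => s(p.1, p.2) = e)).card := by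
      calc 2 * Wf.card = Wf.card * 2 := by ring
      _ ≤ _ := Finset.card_nsmul_le_sum _ _ _ hfib2
    have h2 : (Cf.filter (fun e => ¬ ∀ a ∈ e, a ∈ S)).card ≤
        ∑ e ∈ Cf.filter (fun e => ¬ ∀ a ∈ e, a ∈ S),
          (P.filter (fun p => s(p.1, p.2) = e)).card := by
      calc (Cf.filter (fun e => ¬ ∀ a ∈ e, a ∈ S)).card
          = (Cf.filter (fun e => ¬ ∀ a ∈ e, a ∈ S)).card * 1 := by ring
      _ ≤ _ := Finset.card_nsmul_le_sum _ _ _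
          (fun e he => hfib1 e (Finset.mem_filter.1 he).1)
    have hcards : Wf.card + (Cf.filter (fun e => ¬ ∀ a ∈ e, a ∈ S)).card = Cf.card := by
      rw [hWfdef]; exact Finset.card_filter_add_card_filter_not _
    omega
  -- incidence edges
  have hinc : ∀ v : V, ∀ e : Sym2 V, e ∈ G.incidenceFinset v ↔ e ∈ G.edgeSet ∧ v ∈ e := by
    intro v e
    rw [SimpleGraph.mem_incidenceFinset]
    exact Iff.rfl
  set I : Finset (Sym2 V) := G.incidenceFinset x ∪ G.incidenceFinset y with hIdef
  have hIcard : I.card + 1 = G.degree x + G.degree y := by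
    have hint : G.incidenceFinset x ∩ G.incidenceFinset y = {s(x, y)} := by
      ext e
      simp only [Finset.mem_inter, hinc, Finset.mem_singleton]
      constructor
      · rintro ⟨⟨hE, hx⟩, ⟨-, hy⟩⟩
        exact (Sym2.mem_and_mem_iff hxy.ne).1 ⟨hx, hy⟩
      · rintro rfl
        exact ⟨⟨hxy, by simp⟩, ⟨hxy, by simp⟩⟩
    have := Finset.card_union_add_card_inter (G.incidenceFinset x) (G.incidenceFinset y)
    rw [hint, Finset.card_singleton, SimpleGraph.card_incidenceFinset_eq_degree,
      SimpleGraph.card_incidenceFinset_eq_degree] at this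
    exact this
  have hIsub : I ⊆ Wf := by
    intro e he
    have he' : (e ∈ G.edgeSet ∧ x ∈ e) ∨ (e ∈ G.edgeSet ∧ y ∈ e) := by
      rcases Finset.mem_union.1 he with h | h
      · exact Or.inl ((hinc x e).1 h)
      · exact Or.inr ((hinc y e).1 h)
    have hE : e ∈ G.edgeSet := by rcases he' with h | h <;> exact h.1
    have hall : ∀ a ∈ e, a ∈ S := by
      induction e using Sym2.ind with
      | _ a b =>
        rw [SimpleGraph.mem_edgeSet] at hE
        intro c hc
        rw [Sym2.mem_iff] at hc
        rcases he' with ⟨-, hv⟩ | ⟨-, hv⟩ <;> rw [Sym2.mem_iff] at hv <;>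
          rcases hv with rfl | rfl <;> rcases hc with rfl | rfl <;>
          · first
            | exact hxS
            | exact hyS
            | exact (hmemS _).2 (Or.inl hE)
            | exact (hmemS _).2 (Or.inl hE.symm)
            | exact (hmemS _).2 (Or.inr hE)
            | exact (hmemS _).2 (Or.inr hE.symm)
    refine Finset.mem_filter.2 ⟨(hCmem e).2 ⟨hE, ?_⟩, hall⟩
    induction e using Sym2.ind with
    | _ a b => exact ⟨a, by simp, hall a (by simp)⟩
  -- edgesWithin finset
  have hW1fin : (edgesWithin G ((G.neighborSet x ∪ G.neighborSet y) \ {x, y})).Finite :=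
    Set.toFinite _
  set W1 : Finset (Sym2 V) := hW1fin.toFinset with hW1def
  have hW1mem : ∀ e, e ∈ W1 ↔ e ∈ G.edgeSet ∧ ∀ a ∈ e, a ∈ S ∧ a ≠ x ∧ a ≠ y := by
    intro e
    rw [hW1def, Set.Finite.mem_toFinset]
    unfold edgesWithin
    simp only [Set.mem_setOf_eq, Set.mem_diff, Set.mem_union, Set.mem_insert_iff,
      Set.mem_singleton_iff, SimpleGraph.mem_neighborSet]
    constructor
    · rintro ⟨hE, h⟩
      refine ⟨hE, fun a ha => ?_⟩
      rcases h a ha with ⟨h1, h2⟩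
      exact ⟨(hmemS a).2 h1, fun h => h2 (Or.inl h), fun h => h2 (Or.inr h)⟩
    · rintro ⟨hE, h⟩
      refine ⟨hE, fun a ha => ?_⟩
      rcases h a ha with ⟨h1, h2, h3⟩
      exact ⟨(hmemS a).1 h1, by tauto⟩
  have hW1sub : W1 ⊆ Wf := by
    intro e he
    rcases (hW1mem e).1 he with ⟨hE, h⟩
    have hall : ∀ a ∈ e, a ∈ S := fun a ha => (h a ha).1
    refine Finset.mem_filter.2 ⟨(hCmem e).2 ⟨hE, ?_⟩, hall⟩
    induction e using Sym2.ind with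
    | _ a b => exact ⟨a, by simp, hall a (by simp)⟩
  have hdisj : Disjoint W1 I := by
    rw [Finset.disjoint_left]
    intro e he heI
    rcases (hW1mem e).1 he with ⟨-, h⟩
    rcases Finset.mem_union.1 heI with hI | hI
    · exact ((h x ((hinc x e).1 hI).2).2.1 rfl)
    · exact ((h y ((hinc y e).1 hI).2).2.2 rfl)
  have hWlow : W1.card + I.card ≤ Wf.card := by
    rw [← Finset.card_union_of_disjoint hdisj]
    exact Finset.card_le_card (Finset.union_subset hW1sub hIsub)
  -- |S| + n = deg x + deg y
  have hScard : S.card + (G.neighborFinset x ∩ G.neighborFinset y).card =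
      G.degree x + G.degree y := by
    rw [hSdef, Finset.card_union_add_card_inter]
    rfl
  -- translations of ncard to card
  have hCcard : (CSet G s(x, y)).ncard = Cf.card := by
    rw [hCfdef, Set.ncard_eq_toFinset_card']
    congr 1
    simp [Set.Finite.toFinset]
  have hncard : (G.neighborSet x ∩ G.neighborSet y).ncard =
      (G.neighborFinset x ∩ G.neighborFinset y).card := by
    rw [Set.ncard_eq_toFinset_card']
    congr 1
    rw [Set.toFinset_inter]
    simp [SimpleGraph.neighborFinset_def]
  have hmcard : (edgesWithin G ((G.neighborSet x ∪ G.neighborSet y) \ {x, y})).ncard =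
      W1.card := by
    rw [hW1def, Set.ncard_eq_toFinset_card']
    congr 1
    simp [Set.Finite.toFinset]
  have hdx : G.degree x ≤ d := hdeg x
  have hdy : G.degree y ≤ d := hdeg y
  -- final arithmetic
  rw [hCcard, hncard, hmcard]
  have hZ1 : (Cf.card : ℤ) + Wf.card ≤ P.card := by exact_mod_cast hCW
  have hZ2 : (P.card : ℤ) ≤ S.card * d := by exact_mod_cast hP1
  have hZ3 : (S.card : ℤ) + (G.neighborFinset x ∩ G.neighborFinset y).card =
      G.degree x + G.degree y := by exact_mod_cast hScard
  have hZ4 : (W1.card : ℤ) + I.card ≤ Wf.card := by exact_mod_cast hWlow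
  have hZ5 : (I.card : ℤ) + 1 = G.degree x + G.degree y := by exact_mod_cast hIcard
  have hZ6 : (G.degree x : ℤ) ≤ d := by exact_mod_cast hdx
  have hZ7 : (G.degree y : ℤ) ≤ d := by exact_mod_cast hdy
  have hZ8 : (3 : ℤ) ≤ d := by exact_mod_cast hd
  nlinarith [hZ1, hZ2, hZ3, hZ4, hZ5, hZ6, hZ7, hZ8,
    mul_nonneg (sub_nonneg.2 hZ6) (by linarith : (0:ℤ) ≤ (d:ℤ) - 1),
    mul_nonneg (sub_nonneg.2 hZ7) (by linarith : (0:ℤ) ≤ (d:ℤ) - 1)]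
end

section
/- If G is a d-regular graph with d ≥ 1, then every induced matching M of G satisfies |M| ≤ m(G)/(2d − 1), where m(G) is the number of edges of G. -/
open Classical

variable {V : Type*}

lemma edge_mem_cases {G : SimpleGraph V} {g : Sym2 V} (hg : g ∈ G.edgeSet)
    {x y : V} (hx : x ∈ g) (hy : y ∈ g) : x = y ∨ G.Adj x y := by
  induction g using Sym2.ind with
  | _ u v =>
    rw [SimpleGraph.mem_edgeSet] at hg
    rw [Sym2.mem_iff] at hx hy
    rcases hx with rfl | rfl <;> rcases hy with rfl | rfl
    · exact Or.inl rfl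
    · exact Or.inr hg
    · exact Or.inr hg.symm
    · exact Or.inl rfl


/-- in a `d`-regular graph, induced matchings have at most `m(G)/(2d-1)` edges. -/
theorem stmt1 [Fintype V] (G : SimpleGraph V) (d : ℕ) (hd : 1 ≤ d)
    (hreg : ∀ v : V, (G.neighborSet v).ncard = d)
    (M : Set (Sym2 V)) (hM : IsInducedMatching G M) :
    (M.ncard : ℝ) ≤ (G.edgeSet.ncard : ℝ) / (2 * d - 1) := by
  classical
  have hd1 : (1:ℝ) ≤ (d:ℝ) := by exact_mod_cast hd
  have hdpos : (0:ℝ) < 2 * (d:ℝ) - 1 := by linarith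
  rw [le_div_iff₀ hdpos]
  have hdeg : ∀ v : V, G.degree v = d := by
    intro v
    rw [← hreg v, SimpleGraph.degree, SimpleGraph.neighborFinset,
      Set.ncard_eq_toFinset_card']
  -- the conflict neighborhood
  set N : Sym2 V → Finset (Sym2 V) :=
    fun e => G.edgeFinset.filter (fun g => ∃ x ∈ e, x ∈ g) with hNdef
  have hMfin : M.Finite := Set.toFinite M
  set Mf : Finset (Sym2 V) := hMfin.toFinset with hMf
  have hcard : ∀ e ∈ Mf, (N e).card = 2 * d - 1 := by
    intro e he
    rw [hMf, Set.Finite.mem_toFinset] at he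
    have heE : e ∈ G.edgeSet := hM.1 he
    induction e using Sym2.ind with
    | _ a b =>
      rw [SimpleGraph.mem_edgeSet] at heE
      have hNe : N s(a, b) = G.incidenceFinset a ∪ G.incidenceFinset b := by
        ext g
        simp only [hNdef, Finset.mem_filter, Finset.mem_union,
          SimpleGraph.mem_incidenceFinset, SimpleGraph.incidenceSet,
          Set.mem_setOf_eq, Sym2.mem_iff, SimpleGraph.mem_edgeFinset]
        constructor
        · rintro ⟨hgE, x, (rfl | rfl), hxg⟩
          · exact Or.inl ⟨hgE, hxg⟩
          · exact Or.inr ⟨hgE, hxg⟩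
        · rintro (⟨hgE, hxg⟩ | ⟨hgE, hxg⟩)
          · exact ⟨hgE, a, Or.inl rfl, hxg⟩
          · exact ⟨hgE, b, Or.inr rfl, hxg⟩
      have hinter : G.incidenceFinset a ∩ G.incidenceFinset b = {s(a, b)} := by
        have hset := G.incidenceSet_inter_incidenceSet_of_adj heE
        ext g
        simp only [Finset.mem_inter, SimpleGraph.mem_incidenceFinset,
          Finset.mem_singleton]
        rw [← Set.mem_inter_iff, hset, Set.mem_singleton_iff]
      have h1 : (G.incidenceFinset a ∪ G.incidenceFinset b).card
          + (G.incidenceFinset a ∩ G.incidenceFinset b).card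
          = (G.incidenceFinset a).card + (G.incidenceFinset b).card :=
        Finset.card_union_add_card_inter _ _
      rw [hinter, Finset.card_singleton, G.card_incidenceFinset_eq_degree,
        G.card_incidenceFinset_eq_degree, hdeg, hdeg] at h1
      rw [hNe]
      omega
  have hdisj : ∀ e ∈ Mf, ∀ f ∈ Mf, e ≠ f → Disjoint (N e) (N f) := by
    intro e he f hf hef
    rw [hMf, Set.Finite.mem_toFinset] at he hf
    rw [Finset.disjoint_left]
    intro g hge hgf
    simp only [hNdef, Finset.mem_filter, SimpleGraph.mem_edgeFinset] at hge hgf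
    obtain ⟨hgE, x, hxe, hxg⟩ := hge
    obtain ⟨_, y, hyf, hyg⟩ := hgf
    exact hM.2 e he f hf hef ⟨x, hxe, y, hyf, edge_mem_cases hgE hxg hyg⟩
  have hsub : Mf.biUnion N ⊆ G.edgeFinset := by
    intro g hg
    simp only [Finset.mem_biUnion] at hg
    obtain ⟨e, _, hg⟩ := hg
    exact (Finset.mem_filter.1 hg).1
  have hbu : (Mf.biUnion N).card = Mf.card * (2 * d - 1) := by
    rw [Finset.card_biUnion hdisj]
    rw [Finset.sum_congr rfl hcard, Finset.sum_const, smul_eq_mul]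
  have hle : Mf.card * (2 * d - 1) ≤ G.edgeSet.ncard := by
    rw [← hbu, Set.ncard_eq_toFinset_card']
    exact Finset.card_le_card (by simpa [SimpleGraph.edgeFinset] using hsub)
  have hMcard : M.ncard = Mf.card := Set.ncard_eq_toFinset_card M hMfin
  have : ((Mf.card * (2 * d - 1) : ℕ) : ℝ) ≤ (G.edgeSet.ncard : ℝ) := by
    exact_mod_cast hle
  rw [hMcard]
  push_cast [Nat.cast_sub (by omega : 1 ≤ 2 * d)] at this ⊢
  linarith
end

section
/- Let G be a graph, M an induced matching of G, and xy an edge in M. Let PC_G(M, xy) = C_G(xy) \ ⋃_{f ∈ M, f ≠ xy} C_G(f) be the set of private conflict edges of xy. Let N₂ be the set of vertices outside N_G[x] ∪ N_G[y] that are incident with an edge of PC_G(M, xy). If M is maximal, then N₂ is an independent set in G. -/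
open Classical

variable {V : Type*}

lemma conflict_symm {G : SimpleGraph V} {e f : Sym2 V} (h : Conflict G e f) :
    Conflict G f e := by
  obtain ⟨a, ha, b, hb, hab⟩ := h
  exact ⟨b, hb, a, ha, by rcases hab with h | h; exact Or.inl h.symm; exact Or.inr h.symm⟩

lemma maximal_conflict {G : SimpleGraph V} {M : Set (Sym2 V)}
    (hM : IsMaximalInducedMatching G M) {f : Sym2 V} (hf : f ∈ G.edgeSet)
    (hfM : f ∉ M) : ∃ g ∈ M, Conflict G g f := by
  by_contra h
  push_neg at h
  have him : IsInducedMatching G (M ∪ {f}) := by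
    constructor
    · rintro e (he | he)
      · exact hM.1.1 he
      · simpa using he ▸ hf
    · rintro e (he | he) g (hg | hg) hne hc
      · exact hM.1.2 e he g hg hne hc
      · simp only [Set.mem_singleton_iff] at hg
        exact h e he (hg ▸ hc)
      · simp only [Set.mem_singleton_iff] at he
        exact h g hg (he ▸ conflict_symm hc)
      · simp only [Set.mem_singleton_iff] at he hg
        exact hne (he.trans hg.symm)
  have := hM.2 (M ∪ {f}) him Set.subset_union_left
  exact hfM (this ▸ Set.mem_union_right M rfl)

/-- the outer vertices incident with private conflict edges form an independent set. -/
theorem stmt4 (G : SimpleGraph V) (M : Set (Sym2 V))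
    (hM : IsMaximalInducedMatching G M) (x y : V) (hxy : G.Adj x y)
    (hmem : s(x, y) ∈ M)
    (N₂ : Set V)
    (hN₂ : N₂ = {v : V | v ∉ (G.neighborSet x ∪ {x}) ∪ (G.neighborSet y ∪ {y}) ∧
      ∃ e ∈ PCSet G M s(x, y), v ∈ e}) :
    ∀ u ∈ N₂, ∀ v ∈ N₂, ¬ G.Adj u v := by
  intro u hu v hv hadj
  subst hN₂
  obtain ⟨hu1, eu, heu, hueu⟩ := hu
  obtain ⟨hv1, ev, hev, hvev⟩ := hv
  simp only [Set.mem_union, SimpleGraph.mem_neighborSet, Set.mem_singleton_iff, not_or] at hu1 hv1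
  obtain ⟨⟨hxu, hux⟩, hyu, huy⟩ := hu1
  obtain ⟨⟨hxv, hvx⟩, hyv, hvy⟩ := hv1
  have hpriv : ∀ {e : Sym2 V}, e ∈ PCSet G M s(x,y) → ∀ g ∈ M, g ≠ s(x,y) → e ∉ CSet G g := by
    intro e he g hg hgne hce
    exact he.2 (Set.mem_biUnion (Set.mem_diff_singleton.mpr ⟨hg, hgne⟩) hce)
  have heuE : eu ∈ G.edgeSet := heu.1.1
  by_cases hfM : s(u, v) ∈ M
  · have hne : s(u, v) ≠ s(x, y) := by
      intro h
      have : u ∈ s(x, y) := h ▸ Sym2.mem_mk_left u v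
      rcases Sym2.mem_iff.mp this with h | h
      · exact hux h
      · exact huy h
    exact hpriv heu _ hfM hne ⟨heuE, ⟨u, Sym2.mem_mk_left u v, u, hueu, Or.inl rfl⟩⟩
  · obtain ⟨g, hg, a, hag, b, hbf, hab⟩ := maximal_conflict hM hadj hfM
    by_cases hgxy : g = s(x, y)
    · subst hgxy
      rcases Sym2.mem_iff.mp hag with ha | ha <;> rcases Sym2.mem_iff.mp hbf with hb | hb <;>
        subst ha <;> subst hb <;>
        rcases hab with h | h
      · exact hux h.symm
      · exact hxu h
      · exact hvx h.symm
      · exact hxv h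
      · exact huy h.symm
      · exact hyu h
      · exact hvy h.symm
      · exact hyv h
    · rcases Sym2.mem_iff.mp hbf with hb | hb
      · subst hb
        exact hpriv heu g hg hgxy ⟨heuE, ⟨a, hag, b, hueu, hab⟩⟩
      · subst hb
        exact hpriv hev g hg hgxy ⟨hev.1.1, ⟨a, hag, b, hvev, hab⟩⟩
end

section
/- Let G be a graph, M an induced matching of G, and xy ∈ M. Let N₁ be the set of vertices in (N_G(x) ∪ N_G(y)) \ {x, y} incident with an edge of PC_G(M, xy), and N₂ the set of vertices outside N_G[x] ∪ N_G[y] incident with an edge of PC_G(M, xy). Then PC_G(M, xy) equals the union of the set of edges of G with both endpoints in {x, y} ∪ N₁ and the set of edges of G with one endpoint in N₁ and the other in N₂. -/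
open Classical

variable {V : Type*}

/-- structure of the set of private conflict edges. -/
theorem stmt5 (G : SimpleGraph V) (M : Set (Sym2 V))
    (hM : IsInducedMatching G M) (x y : V) (hxy : G.Adj x y)
    (hmem : s(x, y) ∈ M)
    (N₁ N₂ : Set V)
    (hN₁ : N₁ = {v : V | v ∈ (G.neighborSet x ∪ G.neighborSet y) \ {x, y} ∧
      ∃ e ∈ PCSet G M s(x, y), v ∈ e})
    (hN₂ : N₂ = {v : V | v ∉ (G.neighborSet x ∪ {x}) ∪ (G.neighborSet y ∪ {y}) ∧
      ∃ e ∈ PCSet G M s(x, y), v ∈ e}) :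
    PCSet G M s(x, y) = edgesWithin G ({x, y} ∪ N₁) ∪ edgesBetween G N₁ N₂ := by
  obtain ⟨hMsub, hMind⟩ := hM
  -- if v lies on a private conflict edge, no edge of M \ {xy} touches v
  have key : ∀ v : V, (∃ e' ∈ PCSet G M s(x, y), v ∈ e') →
      ∀ f ∈ M, f ≠ s(x, y) → ∀ a ∈ f, ¬(a = v ∨ G.Adj a v) := by
    rintro v ⟨e', he', hve'⟩ f hf hfne a haf hav
    have hC : e' ∈ CSet G f := ⟨he'.1.1, a, haf, v, hve', hav⟩
    exact he'.2 (Set.mem_biUnion (show f ∈ M \ {s(x, y)} from ⟨hf, hfne⟩) hC)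
  have keyxy : ∀ v ∈ s(x, y), ∀ f ∈ M, f ≠ s(x, y) → ∀ a ∈ f, ¬(a = v ∨ G.Adj a v) := by
    rintro v hv f hf hfne a haf hav
    exact hMind f hf s(x, y) hmem hfne ⟨a, haf, v, hv, hav⟩
  ext e
  constructor
  · rintro ⟨⟨heE, hconf⟩, hpriv⟩
    have hePC : e ∈ PCSet G M s(x, y) := ⟨⟨heE, hconf⟩, hpriv⟩
    induction e using Sym2.inductionOn with
    | _ u w =>
    have hadj : G.Adj u w := heE
    -- classify vertices of e
    have classify : ∀ v ∈ (s(u, w) : Sym2 V), v = x ∨ v = y ∨ v ∈ N₁ ∨ v ∈ N₂ := by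
      intro v hv
      by_cases hvx : v = x
      · exact Or.inl hvx
      by_cases hvy : v = y
      · exact Or.inr (Or.inl hvy)
      by_cases hvn : v ∈ G.neighborSet x ∪ G.neighborSet y
      · refine Or.inr (Or.inr (Or.inl ?_))
        rw [hN₁]
        exact ⟨⟨hvn, by simp [hvx, hvy]⟩, s(u, w), hePC, hv⟩
      · refine Or.inr (Or.inr (Or.inr ?_))
        rw [hN₂]
        refine ⟨?_, s(u, w), hePC, hv⟩
        simp only [Set.mem_union, Set.mem_singleton_iff] at hvn ⊢
        push_neg at hvn ⊢
        exact ⟨⟨hvn.1, hvx⟩, hvn.2, hvy⟩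
    have hN₁sub : ∀ v ∈ N₁, v ∈ G.neighborSet x ∪ G.neighborSet y ∧ v ≠ x ∧ v ≠ y := by
      intro v hv; rw [hN₁] at hv
      refine ⟨hv.1.1, ?_, ?_⟩ <;>
        · have := hv.1.2; simp only [Set.mem_insert_iff, Set.mem_singleton_iff] at this
          tauto
    have hN₂sub : ∀ v ∈ N₂, ¬ G.Adj x v ∧ ¬ G.Adj y v ∧ v ≠ x ∧ v ≠ y := by
      intro v hv; rw [hN₂] at hv
      have := hv.1
      simp only [Set.mem_union, SimpleGraph.mem_neighborSet, Set.mem_singleton_iff] at this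
      push_neg at this
      exact ⟨this.1.1, this.2.1, this.1.2, this.2.2⟩
    -- from the conflict, one endpoint is in {x,y} ∪ N₁
    have hone : (u = x ∨ u = y ∨ u ∈ N₁) ∨ (w = x ∨ w = y ∨ w ∈ N₁) := by
      obtain ⟨a, ha, b, hb, hab⟩ := hconf
      have hab' : a = x ∨ a = y := by
        rw [Sym2.mem_iff] at ha; exact ha
      have hb' : b = u ∨ b = w := by
        rw [Sym2.mem_iff] at hb; exact hb
      have hbmem : b = x ∨ b = y ∨ b ∈ N₁ := by
        rcases hab with rfl | hadj'
        · tauto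
        · by_cases hbx : b = x
          · exact Or.inl hbx
          by_cases hby : b = y
          · exact Or.inr (Or.inl hby)
          refine Or.inr (Or.inr ?_)
          rw [hN₁]
          refine ⟨⟨?_, by simp [hbx, hby]⟩, s(u, w), hePC, hb⟩
          rcases hab' with rfl | rfl
          · exact Or.inl hadj'
          · exact Or.inr hadj'
      rcases hb' with rfl | rfl
      · exact Or.inl hbmem
      · exact Or.inr hbmem
    have hdisj : ∀ v, v ∈ N₂ → ¬(v = x ∨ v = y ∨ v ∈ N₁) := by
      rintro v hv (rfl | rfl | hv1)
      · exact (hN₂sub v hv).2.2.1 rfl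
      · exact (hN₂sub v hv).2.2.2 rfl
      · have h1 := hN₁sub v hv1
        have h2 := hN₂sub v hv
        rcases h1.1 with h | h
        · exact h2.1 h
        · exact h2.2.1 h
    have hinc : ∀ z : V, (z = x ∨ z = y ∨ z ∈ N₁) → z ∈ ({x, y} : Set V) ∪ N₁ := by
      rintro z (rfl | rfl | h)
      · exact Or.inl (Or.inl rfl)
      · exact Or.inl (Or.inr rfl)
      · exact Or.inr h
    have within : (u = x ∨ u = y ∨ u ∈ N₁) → (w = x ∨ w = y ∨ w ∈ N₁) →
        s(u, w) ∈ edgesWithin G ({x, y} ∪ N₁) ∪ edgesBetween G N₁ N₂ := by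
      intro h1 h2
      left
      refine ⟨heE, ?_⟩
      intro v hv
      rw [Sym2.mem_iff] at hv
      rcases hv with rfl | rfl
      · exact hinc _ h1
      · exact hinc _ h2
    rcases classify u (by simp) with hu | hu | hu | hu <;>
      rcases classify w (by simp) with hw | hw | hw | hw
    · exact within (Or.inl hu) (Or.inl hw)
    · exact within (Or.inl hu) (Or.inr (Or.inl hw))
    · exact within (Or.inl hu) (Or.inr (Or.inr hw))
    · exact absurd hadj (hu ▸ (hN₂sub w hw).1)
    · exact within (Or.inr (Or.inl hu)) (Or.inl hw)
    · exact within (Or.inr (Or.inl hu)) (Or.inr (Or.inl hw))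
    · exact within (Or.inr (Or.inl hu)) (Or.inr (Or.inr hw))
    · exact absurd hadj (hu ▸ (hN₂sub w hw).2.1)
    · exact within (Or.inr (Or.inr hu)) (Or.inl hw)
    · exact within (Or.inr (Or.inr hu)) (Or.inr (Or.inl hw))
    · exact within (Or.inr (Or.inr hu)) (Or.inr (Or.inr hw))
    · right; exact ⟨heE, u, w, rfl, hu, hw⟩
    · exact absurd hadj.symm (hw ▸ (hN₂sub u hu).1)
    · exact absurd hadj.symm (hw ▸ (hN₂sub u hu).2.1)
    · right; exact ⟨heE, w, u, Sym2.eq_swap, hw, hu⟩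
    · rcases hone with h | h
      · exact absurd h (hdisj u hu)
      · exact absurd h (hdisj w hw)
  · intro he
    have hN₁x : ∀ v ∈ N₁, G.Adj x v ∨ G.Adj y v := by
      intro v hv; rw [hN₁] at hv
      simpa using hv.1.1
    have hN₁pc : ∀ v ∈ N₁, ∃ e' ∈ PCSet G M s(x, y), v ∈ e' := by
      intro v hv; rw [hN₁] at hv; exact hv.2
    have hN₂pc : ∀ v ∈ N₂, ∃ e' ∈ PCSet G M s(x, y), v ∈ e' := by
      intro v hv; rw [hN₂] at hv; exact hv.2
    -- common privacy argument
    have priv : ∀ (heE : e ∈ G.edgeSet),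
        (∀ b ∈ e, b = x ∨ b = y ∨ (∃ e' ∈ PCSet G M s(x, y), b ∈ e')) →
        e ∉ ⋃ f ∈ M \ {s(x, y)}, CSet G f := by
      intro heE hcl hmem'
      simp only [Set.mem_iUnion] at hmem'
      obtain ⟨f, ⟨hfM, hfne⟩, hfC⟩ := hmem'
      obtain ⟨a, haf, b, hbe, hab⟩ := hfC.2
      rcases hcl b hbe with rfl | rfl | hpc
      · exact keyxy b (by simp) f hfM hfne a haf hab
      · exact keyxy b (by simp) f hfM hfne a haf hab
      · exact key b hpc f hfM hfne a haf hab
    rcases he with ⟨heE, hS⟩ | ⟨heE, a, b, rfl, haN₁, hbN₂⟩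
    · -- edgesWithin
      refine ⟨⟨heE, ?_⟩, ?_⟩
      · -- conflict with s(x,y)
        induction e using Sym2.inductionOn with
        | _ u w =>
        have hu := hS u (by simp)
        simp only [Set.mem_union, Set.mem_insert_iff, Set.mem_singleton_iff] at hu
        rcases hu with (rfl | rfl) | hu
        · exact ⟨u, by simp, u, by simp, Or.inl rfl⟩
        · exact ⟨u, by simp [Sym2.mem_iff], u, by simp, Or.inl rfl⟩
        · rcases hN₁x u hu with h | h
          · exact ⟨x, by simp, u, by simp, Or.inr h⟩
          · exact ⟨y, by simp [Sym2.mem_iff], u, by simp, Or.inr h⟩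
      · refine priv heE ?_
        intro b hbe
        have := hS b hbe
        simp only [Set.mem_union, Set.mem_insert_iff, Set.mem_singleton_iff] at this
        rcases this with (rfl | rfl) | h
        · exact Or.inl rfl
        · exact Or.inr (Or.inl rfl)
        · exact Or.inr (Or.inr (hN₁pc b h))
    · -- edgesBetween
      refine ⟨⟨heE, ?_⟩, ?_⟩
      · rcases hN₁x a haN₁ with h | h
        · exact ⟨x, by simp, a, by simp, Or.inr h⟩
        · exact ⟨y, by simp [Sym2.mem_iff], a, by simp, Or.inr h⟩
      · refine priv heE ?_
        intro v hv
        rw [Sym2.mem_iff] at hv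
        rcases hv with rfl | rfl
        · exact Or.inr (Or.inr (hN₁pc v haN₁))
        · exact Or.inr (Or.inr (hN₂pc v hbN₂))
end

section
/- Let G be a {C₃, C₄}-free graph of maximum degree at most d (d ≥ 3), and let M be an induced matching of G that is maximal and stable under the local-search exchange operation. Then for every edge xy ∈ M, the number of private conflict edges satisfies |PC_G(M, xy)| ≤ 2d − 1. -/
open Classical

variable {V : Type*}

section Helpers

variable {G : SimpleGraph V}

lemma conflict_cases {a b c d : V} (h : Conflict G s(a,b) s(c,d)) :
    (a = c ∨ G.Adj a c) ∨ (a = d ∨ G.Adj a d) ∨ (b = c ∨ G.Adj b c) ∨ (b = d ∨ G.Adj b d) := by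
  obtain ⟨u, hu, v, hv, h⟩ := h
  rw [Sym2.mem_iff] at hu hv
  rcases hu with rfl | rfl <;> rcases hv with rfl | rfl <;> tauto

lemma side_flags
    (htri : ∀ ⦃a b c : V⦄, G.Adj a b → G.Adj b c → G.Adj a c → False)
    (hcn : ∀ ⦃a b u v : V⦄, a ≠ b → G.Adj a u → G.Adj b u → G.Adj a v → G.Adj b v → u = v)
    {x y p q : V} (hxy : G.Adj x y) (hp : G.Adj x p) (hpq : G.Adj p q)
    (hpy : p ≠ y) (hqx : q ≠ x) :
    ¬ G.Adj x q ∧ ¬ G.Adj y q ∧ ¬ G.Adj y p := by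
  have hxq : ¬ G.Adj x q := fun h => htri hp hpq h
  have hyp : ¬ G.Adj y p := fun h => htri hxy h hp
  exact ⟨hxq, fun h => hpy (hcn (Ne.symm hqx) hp hpq.symm hxy h.symm), hyp⟩

lemma side_pair
    (htri : ∀ ⦃a b c : V⦄, G.Adj a b → G.Adj b c → G.Adj a c → False)
    (hcn : ∀ ⦃a b u v : V⦄, a ≠ b → G.Adj a u → G.Adj b u → G.Adj a v → G.Adj b v → u = v)
    {x p1 q1 p2 q2 : V}
    (h1 : G.Adj x p1) (h2 : G.Adj x p2) (a1 : G.Adj p1 q1) (a2 : G.Adj p2 q2)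
    (n1 : ¬ G.Adj x q1) (n1x : q1 ≠ x) (n2 : ¬ G.Adj x q2) (n2x : q2 ≠ x)
    (hne : s(p1,q1) ≠ s(p2,q2)) (hc : Conflict G s(p1,q1) s(p2,q2)) :
    (p1 = p2 ∧ q1 ≠ q2) ∨ (p1 ≠ p2 ∧ G.Adj q1 q2) := by
  by_cases hp : p1 = p2
  · exact Or.inl ⟨hp, fun h => hne (by rw [hp, h])⟩
  · refine Or.inr ⟨hp, ?_⟩
    rcases conflict_cases hc with (h | h) | (h | h) | (h | h) | (h | h)
    · exact (hp h).elim
    · exact (htri h1 h h2).elim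
    · subst h; exact (n2 h1).elim
    · exact (hp (hcn (Ne.symm n2x) h1 h.symm h2 a2.symm)).elim
    · subst h; exact (n1 h2).elim
    · exact (hp (hcn (Ne.symm n1x) h1 a1.symm h2 h)).elim
    · subst h; exact (hp (hcn (Ne.symm n1x) h1 a1.symm h2 a2.symm)).elim
    · exact h

lemma b_vs_side
    (htri : ∀ ⦃a b c : V⦄, G.Adj a b → G.Adj b c → G.Adj a c → False)
    (hcn : ∀ ⦃a b u v : V⦄, a ≠ b → G.Adj a u → G.Adj b u → G.Adj a v → G.Adj b v → u = v)
    {x y w p q : V} (hxy : G.Adj x y) (hw : G.Adj y w) (hwx : w ≠ x)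
    (hp : G.Adj x p) (hpq : G.Adj p q) (hpy : p ≠ y) (hqy : q ≠ y)
    (hyq : ¬ G.Adj y q) (hyp : ¬ G.Adj y p)
    (hc : Conflict G s(y,w) s(p,q)) : G.Adj w q := by
  rcases conflict_cases hc with (h | h) | (h | h) | (h | h) | (h | h)
  · exact (hpy h.symm).elim
  · exact (hyp h).elim
  · exact (hqy h.symm).elim
  · exact (hyq h).elim
  · subst h; exact (hyp hw).elim
  · exact (hpy (hcn (Ne.symm hwx) hp h hxy hw.symm)).elim
  · subst h; exact (hyq hw).elim
  · exact h

lemma side_bound [Fintype V]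
    (htri : ∀ ⦃a b c : V⦄, G.Adj a b → G.Adj b c → G.Adj a c → False)
    (hcn : ∀ ⦃a b u v : V⦄, a ≠ b → G.Adj a u → G.Adj b u → G.Adj a v → G.Adj b v → u = v)
    {d : ℕ} (hd : 3 ≤ d)
    (hΔ : ∀ v : V, (G.neighborSet v).ncard ≤ d) {x : V} (S : Set (Sym2 V))
    (hS : ∀ e ∈ S, ∃ p q, e = s(p,q) ∧ G.Adj x p ∧ G.Adj p q ∧ ¬ G.Adj x q ∧ q ≠ x)
    (hconf : ∀ e ∈ S, ∀ f ∈ S, e ≠ f → Conflict G e f) : S.ncard ≤ d - 1 := by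
  rcases le_or_gt S.ncard 1 with h | h
  · omega
  obtain ⟨e1, e2, he1, he2, hne⟩ := (Set.one_lt_ncard_iff (Set.toFinite _)).mp h
  obtain ⟨p1, q1, rfl, h1, a1, n1, n1x⟩ := hS e1 he1
  obtain ⟨p2, q2, rfl, h2, a2, n2, n2x⟩ := hS e2 he2
  have hpair := side_pair htri hcn h1 h2 a1 a2 n1 n1x n2 n2x hne (hconf _ he1 _ he2 hne)
  rcases hpair with ⟨hp, hq⟩ | ⟨hp, hq⟩
  · subst hp
    have hsub : S ⊆ (fun z => s(p1, z)) '' (G.neighborSet p1 \ {x}) := by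
      intro e3 he3
      obtain ⟨p3, q3, rfl, h3, a3, n3, n3x⟩ := hS e3 he3
      have hp3 : p3 = p1 := by
        by_contra hp3
        have hne31 : s(p3,q3) ≠ s(p1,q1) := by
          intro hE
          rcases Sym2.eq_iff.mp hE with ⟨hA, _⟩ | ⟨hA, _⟩
          · exact hp3 hA
          · exact n1 (hA ▸ h3)
        have hne32 : s(p3,q3) ≠ s(p1,q2) := by
          intro hE
          rcases Sym2.eq_iff.mp hE with ⟨hA, _⟩ | ⟨hA, _⟩
          · exact hp3 hA
          · exact n2 (hA ▸ h3)
        have c31 := side_pair htri hcn h3 h1 a3 a1 n3 n3x n1 n1x hne31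
          (hconf _ he3 _ he1 hne31)
        have c32 := side_pair htri hcn h3 h2 a3 a2 n3 n3x n2 n2x hne32
          (hconf _ he3 _ he2 hne32)
        rcases c31 with ⟨hE, _⟩ | ⟨_, ha31⟩
        · exact hp3 hE
        rcases c32 with ⟨hE, _⟩ | ⟨_, ha32⟩
        · exact hp3 hE
        have hpq3 : p1 = q3 := hcn hq a1.symm a2.symm ha31.symm ha32.symm
        exact n3 (hpq3 ▸ h1)
      subst hp3
      exact ⟨q3, ⟨a3, n3x⟩, rfl⟩
    calc S.ncard ≤ ((fun z => s(p1, z)) '' (G.neighborSet p1 \ {x})).ncard :=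
          Set.ncard_le_ncard hsub (Set.toFinite _)
      _ ≤ (G.neighborSet p1 \ {x}).ncard := Set.ncard_image_le (Set.toFinite _)
      _ = (G.neighborSet p1).ncard - 1 :=
          Set.ncard_diff_singleton_of_mem ((G.mem_neighborSet p1 x).mpr h1.symm)
      _ ≤ d - 1 := Nat.sub_le_sub_right (hΔ p1) 1
  · have hsub : S ⊆ {s(p1,q1), s(p2,q2)} := by
      intro e3 he3
      by_contra he3n
      simp only [Set.mem_insert_iff, Set.mem_singleton_iff, not_or] at he3n
      obtain ⟨hne31, hne32⟩ := he3n
      obtain ⟨p3, q3, rfl, h3, a3, n3, n3x⟩ := hS e3 he3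
      have c31 := side_pair htri hcn h3 h1 a3 a1 n3 n3x n1 n1x hne31
        (hconf _ he3 _ he1 hne31)
      have c32 := side_pair htri hcn h3 h2 a3 a2 n3 n3x n2 n2x hne32
        (hconf _ he3 _ he2 hne32)
      rcases c31 with ⟨hA, hB⟩ | ⟨hA, aj1⟩ <;> rcases c32 with ⟨hC, hD⟩ | ⟨hC, aj2⟩
      · exact hp (hA.symm.trans hC)
      · have : p1 = q2 := hcn (Ne.symm hB) a1.symm (hA ▸ a3.symm) hq aj2
        exact n2 (this ▸ h1)
      · have : p2 = q1 := hcn (Ne.symm hD) a2.symm (hC ▸ a3.symm) hq.symm aj1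
        exact n1 (this ▸ h2)
      · exact htri hq aj2.symm aj1.symm
    calc S.ncard ≤ ({s(p1,q1), s(p2,q2)} : Set (Sym2 V)).ncard :=
          Set.ncard_le_ncard hsub (Set.toFinite _)
      _ ≤ 2 := le_trans (Set.ncard_insert_le _ _) (by simp)
      _ ≤ d - 1 := by omega

end Helpers

section Key

variable {G : SimpleGraph V}

lemma key2 [Fintype V] {d : ℕ} (hd : 3 ≤ d)
    (hΔ : ∀ v : V, (G.neighborSet v).ncard ≤ d)
    {x y : V} (hxy : G.Adj x y) (F : Set (Sym2 V)) (hFe : F ⊆ G.edgeSet)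
    (hall : ∀ e ∈ F, x ∈ e ∨ y ∈ e) : F.ncard ≤ 2 * d - 1 := by
  have hcover : F ⊆ (fun z => s(x, z)) '' (G.neighborSet x) ∪
      (fun z => s(y, z)) '' (G.neighborSet y \ {x}) := by
    intro e he
    rcases hall e he with hx | hy
    · obtain ⟨b, rfl⟩ := Sym2.mem_iff_exists.mp hx
      exact Or.inl ⟨b, (G.mem_edgeSet).mp (hFe he), rfl⟩
    · obtain ⟨w, rfl⟩ := Sym2.mem_iff_exists.mp hy
      have hyw : G.Adj y w := (G.mem_edgeSet).mp (hFe he)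
      by_cases hwx : w = x
      · refine Or.inl ⟨y, (G.mem_neighborSet x y).mpr hxy, ?_⟩
        rw [hwx]
        exact Sym2.eq_swap
      · exact Or.inr ⟨w, ⟨hyw, hwx⟩, rfl⟩
  have h1 : ((fun z => s(x, z)) '' (G.neighborSet x)).ncard ≤ d :=
    le_trans (Set.ncard_image_le (Set.toFinite _)) (hΔ x)
  have h2 : ((fun z => s(y, z)) '' (G.neighborSet y \ {x})).ncard ≤ d - 1 := by
    refine le_trans (Set.ncard_image_le (Set.toFinite _)) ?_
    rw [Set.ncard_diff_singleton_of_mem ((G.mem_neighborSet y x).mpr hxy.symm)]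
    exact Nat.sub_le_sub_right (hΔ y) 1
  have := le_trans (Set.ncard_le_ncard hcover (Set.toFinite _)) (Set.ncard_union_le _ _)
  omega

lemma key1 [Fintype V] {d : ℕ} (hd : 3 ≤ d)
    (hΔ : ∀ v : V, (G.neighborSet v).ncard ≤ d)
    (htri : ∀ ⦃a b c : V⦄, G.Adj a b → G.Adj b c → G.Adj a c → False)
    (hcn : ∀ ⦃a b u v : V⦄, a ≠ b → G.Adj a u → G.Adj b u → G.Adj a v → G.Adj b v → u = v)
    {x y : V} (hxy : G.Adj x y) (F : Set (Sym2 V)) (hFe : F ⊆ G.edgeSet)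
    (hxyF : s(x, y) ∈ F)
    (hconf : ∀ e ∈ F, ∀ f ∈ F, e ≠ f → Conflict G e f)
    (hside : ∃ e ∈ F, x ∉ e ∧ y ∉ e ∧ ∃ a ∈ e, G.Adj x a) :
    F.ncard ≤ 2 * d - 1 := by
  classical
  set A : Set (Sym2 V) := {e | e ∈ F ∧ x ∈ e} with hAdef
  set B : Set (Sym2 V) := {e | e ∈ F ∧ y ∈ e ∧ x ∉ e} with hBdef
  set CX : Set (Sym2 V) := {e | e ∈ F ∧ x ∉ e ∧ y ∉ e ∧ ∃ a ∈ e, G.Adj x a} with hCXdef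
  set CY : Set (Sym2 V) := {e | e ∈ F ∧ x ∉ e ∧ y ∉ e ∧ ∃ a ∈ e, G.Adj y a} with hCYdef
  -- generic extraction of the structure of a side edge
  have getS : ∀ (u v : V), G.Adj u v → ∀ e, e ∈ F → u ∉ e → v ∉ e → (∃ a ∈ e, G.Adj u a) →
      ∃ p q, e = s(p,q) ∧ G.Adj u p ∧ G.Adj p q ∧ p ≠ u ∧ p ≠ v ∧ q ≠ u ∧ q ≠ v ∧
        ¬ G.Adj u q ∧ ¬ G.Adj v q ∧ ¬ G.Adj v p := by
    intro u v huv e he hue hve hex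
    obtain ⟨a, b, rfl⟩ : ∃ a b, e = s(a, b) := Sym2.ind (fun a b => ⟨a, b, rfl⟩) e
    have hab : G.Adj a b := (G.mem_edgeSet).mp (hFe he)
    rw [Sym2.mem_iff, not_or] at hue hve
    obtain ⟨hua, hub⟩ := hue
    obtain ⟨hva, hvb⟩ := hve
    obtain ⟨c, hc, hadj⟩ := hex
    rw [Sym2.mem_iff] at hc
    rcases hc with rfl | rfl
    · obtain ⟨f1, f2, f3⟩ := side_flags htri hcn huv hadj hab
        (Ne.symm hva) (Ne.symm hub)
      exact ⟨c, b, rfl, hadj, hab, Ne.symm hua, Ne.symm hva, Ne.symm hub, Ne.symm hvb,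
        f1, f2, f3⟩
    · obtain ⟨f1, f2, f3⟩ := side_flags htri hcn huv hadj hab.symm
        (Ne.symm hvb) (Ne.symm hua)
      exact ⟨c, a, Sym2.eq_swap, hadj, hab.symm, Ne.symm hub, Ne.symm hvb, Ne.symm hua,
        Ne.symm hva, f1, f2, f3⟩
  have getCX : ∀ e ∈ CX, ∃ p q, e = s(p,q) ∧ G.Adj x p ∧ G.Adj p q ∧ p ≠ x ∧ p ≠ y ∧
      q ≠ x ∧ q ≠ y ∧ ¬ G.Adj x q ∧ ¬ G.Adj y q ∧ ¬ G.Adj y p :=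
    fun e he => getS x y hxy e he.1 he.2.1 he.2.2.1 he.2.2.2
  have getCY : ∀ e ∈ CY, ∃ p q, e = s(p,q) ∧ G.Adj y p ∧ G.Adj p q ∧ p ≠ y ∧ p ≠ x ∧
      q ≠ y ∧ q ≠ x ∧ ¬ G.Adj y q ∧ ¬ G.Adj x q ∧ ¬ G.Adj x p :=
    fun e he => getS y x hxy.symm e he.1 he.2.2.1 he.2.1 he.2.2.2
  -- covering
  have hcover : F ⊆ A ∪ (B ∪ (CX ∪ CY)) := by
    intro e he
    by_cases hx : x ∈ e
    · exact Or.inl ⟨he, hx⟩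
    by_cases hy : y ∈ e
    · exact Or.inr (Or.inl ⟨he, hy, hx⟩)
    have hne : s(x, y) ≠ e := fun h => hx (h ▸ Sym2.mem_mk_left x y)
    obtain ⟨a, ha, b, hb, hab⟩ := hconf _ hxyF _ he hne
    rw [Sym2.mem_iff] at ha
    rcases hab with rfl | hadj
    · rcases ha with rfl | rfl
      · exact (hx hb).elim
      · exact (hy hb).elim
    · rcases ha with rfl | rfl
      · exact Or.inr (Or.inr (Or.inl ⟨he, hx, hy, b, hb, hadj⟩))
      · exact Or.inr (Or.inr (Or.inr ⟨he, hx, hy, b, hb, hadj⟩))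
  have hsum : F.ncard ≤ A.ncard + (B.ncard + (CX.ncard + CY.ncard)) :=
    calc F.ncard ≤ (A ∪ (B ∪ (CX ∪ CY))).ncard := Set.ncard_le_ncard hcover (Set.toFinite _)
      _ ≤ A.ncard + (B ∪ (CX ∪ CY)).ncard := Set.ncard_union_le _ _
      _ ≤ A.ncard + (B.ncard + (CX ∪ CY).ncard) :=
          Nat.add_le_add_left (Set.ncard_union_le _ _) _
      _ ≤ A.ncard + (B.ncard + (CX.ncard + CY.ncard)) :=
          Nat.add_le_add_left (Nat.add_le_add_left (Set.ncard_union_le _ _) _) _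
  -- basic counts
  have hAcard : A.ncard ≤ d := by
    have hsub : A ⊆ (fun z => s(x, z)) '' (G.neighborSet x) := by
      rintro e ⟨he, hx⟩
      obtain ⟨b, rfl⟩ := Sym2.mem_iff_exists.mp hx
      exact ⟨b, (G.mem_edgeSet).mp (hFe he), rfl⟩
    exact le_trans (Set.ncard_le_ncard hsub (Set.toFinite _))
      (le_trans (Set.ncard_image_le (Set.toFinite _)) (hΔ x))
  have hCXd : CX.ncard ≤ d - 1 :=
    side_bound htri hcn hd hΔ CX
      (fun e he => by
        obtain ⟨p, q, h1, h2, h3, _, _, h4, _, h5, _, _⟩ := getCX e he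
        exact ⟨p, q, h1, h2, h3, h5, h4⟩)
      (fun e he f hf hne => hconf e he.1 f hf.1 hne)
  have hCYd : CY.ncard ≤ d - 1 :=
    side_bound htri hcn hd hΔ CY
      (fun e he => by
        obtain ⟨p, q, h1, h2, h3, _, _, h4, _, h5, _, _⟩ := getCY e he
        exact ⟨p, q, h1, h2, h3, h5, h4⟩)
      (fun e he f hf hne => hconf e he.1 f hf.1 hne)
  -- the distinguished CX edge
  obtain ⟨e0, he0F, hx0, hy0, hside0⟩ := hside
  have he0 : e0 ∈ CX := ⟨he0F, hx0, hy0, hside0⟩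
  obtain ⟨p0, q0, he0eq, hp0x, hp0q0, hp0nx, hp0ny, hq0nx, hq0ny, hxq0, hyq0, hyp0⟩ :=
    getCX e0 he0
  subst he0eq
  -- B edges reach the outer endpoint of any CX edge
  have hBw : ∀ e ∈ B, ∀ p q : V, G.Adj x p → G.Adj p q → p ≠ y → q ≠ y →
      ¬ G.Adj y q → ¬ G.Adj y p → s(p,q) ∈ F →
      ∃ w, e = s(y, w) ∧ G.Adj y w ∧ w ≠ x ∧ G.Adj w q := by
    rintro e ⟨heF, hye, hxe⟩ p q hxp hpq hpy hqy hyq hyp hpqF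
    obtain ⟨w, rfl⟩ := Sym2.mem_iff_exists.mp hye
    have hyw : G.Adj y w := (G.mem_edgeSet).mp (hFe heF)
    have hwx : w ≠ x := by intro h; exact hxe (h ▸ Sym2.mem_mk_right y w)
    have hne : s(y, w) ≠ s(p, q) := by
      intro h
      have : y ∈ s(p, q) := h ▸ Sym2.mem_mk_left y w
      rw [Sym2.mem_iff] at this
      rcases this with h' | h'
      · exact hpy h'.symm
      · exact hqy h'.symm
    exact ⟨w, rfl, hyw, hwx,
      b_vs_side htri hcn hxy hyw hwx hxp hpq hpy hqy hyq hyp (hconf _ heF _ hpqF hne)⟩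
  have hB1 : B.ncard ≤ 1 := by
    have hsub : B ⊆ (fun w => s(y, w)) '' {w | G.Adj y w ∧ G.Adj q0 w} := by
      intro e he
      obtain ⟨w, heq, hyw, hwx, hwq⟩ :=
        hBw e he p0 q0 hp0x hp0q0 hp0ny hq0ny hyq0 hyp0 he0F
      exact ⟨w, ⟨hyw, hwq.symm⟩, heq.symm⟩
    have hss : {w | G.Adj y w ∧ G.Adj q0 w}.ncard ≤ 1 := by
      rw [Set.ncard_le_one (Set.toFinite _)]
      rintro a ⟨ha1, ha2⟩ b ⟨hb1, hb2⟩
      exact hcn (Ne.symm hq0ny) ha1 ha2 hb1 hb2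
    exact le_trans (Set.ncard_le_ncard hsub (Set.toFinite _))
      (le_trans (Set.ncard_image_le (Set.toFinite _)) hss)
  have hBempty : 1 < CX.ncard → B.ncard = 0 := by
    intro h
    obtain ⟨e1, e2, he1, he2, hne⟩ := (Set.one_lt_ncard_iff (Set.toFinite _)).mp h
    obtain ⟨p1, q1, he1eq, h1, a1, hp1nx, hp1ny, hq1nx, hq1ny, n1, nyq1, nyp1⟩ := getCX e1 he1
    obtain ⟨p2, q2, he2eq, h2, a2, hp2nx, hp2ny, hq2nx, hq2ny, n2, nyq2, nyp2⟩ := getCX e2 he2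
    subst he1eq; subst he2eq
    have hpair := side_pair htri hcn h1 h2 a1 a2 n1 hq1nx n2 hq2nx hne
      (hconf _ he1.1 _ he2.1 hne)
    rcases Set.eq_empty_or_nonempty B with h0 | ⟨e, he⟩
    · rw [h0]; simp
    exfalso
    obtain ⟨w, heq, hyw, hwx, hw1⟩ := hBw e he p1 q1 h1 a1 hp1ny hq1ny nyq1 nyp1 he1.1
    obtain ⟨w', heq', hyw', hwx', hw2⟩ := hBw e he p2 q2 h2 a2 hp2ny hq2ny nyq2 nyp2 he2.1
    have hww : w = w' := by
      rcases Sym2.eq_iff.mp (heq.symm.trans heq') with ⟨_, h'⟩ | ⟨h1', h2'⟩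
      · exact h'
      · rw [h2', h1']
    subst hww
    rcases hpair with ⟨hpe, hqn⟩ | ⟨hpn, hqa⟩
    · subst hpe
      have hp1w : p1 ≠ w := by rintro rfl; exact nyp1 hyw
      exact hqn (hcn hp1w a1 hw1 a2 hw2)
    · exact htri hqa hw2.symm hw1.symm
  by_cases hCY0 : CY = ∅
  · have hCY0' : CY.ncard = 0 := by rw [hCY0]; simp
    rcases le_or_gt CX.ncard 1 with hk | hk
    · omega
    · have hB0 := hBempty hk
      omega
  · obtain ⟨f0, hf0⟩ := Set.nonempty_iff_ne_empty.mpr hCY0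
    obtain ⟨a0, b0, hf0eq, ha0y, ha0b0, ha0ny, ha0nx, hb0ny, hb0nx, hyb0, hxb0, hxa0⟩ :=
      getCY f0 hf0
    subst hf0eq
    -- A edges other than xy reach the outer endpoint of any CY edge
    have hAw : ∀ e ∈ A, e ≠ s(x, y) → ∀ p q : V, G.Adj y p → G.Adj p q → p ≠ x → q ≠ x →
        ¬ G.Adj x q → ¬ G.Adj x p → s(p,q) ∈ F →
        ∃ w, e = s(x, w) ∧ G.Adj x w ∧ w ≠ y ∧ G.Adj w q := by
      rintro e ⟨heF, hxe⟩ hnexy p q hyp hpq hpx hqx hxq hxp hpqF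
      obtain ⟨w, rfl⟩ := Sym2.mem_iff_exists.mp hxe
      have hxw : G.Adj x w := (G.mem_edgeSet).mp (hFe heF)
      have hwy : w ≠ y := by intro h; exact hnexy (by rw [h])
      have hne : s(x, w) ≠ s(p, q) := by
        intro h
        have : x ∈ s(p, q) := h ▸ Sym2.mem_mk_left x w
        rw [Sym2.mem_iff] at this
        rcases this with h' | h'
        · exact hpx h'.symm
        · exact hqx h'.symm
      exact ⟨w, rfl, hxw, hwy,
        b_vs_side htri hcn hxy.symm hxw hwy hyp hpq hpx hqx hxq hxp (hconf _ heF _ hpqF hne)⟩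
    have hA2 : A.ncard ≤ 2 := by
      have hsub : A ⊆ insert (s(x, y)) ((fun w => s(x, w)) '' {w | G.Adj x w ∧ G.Adj b0 w}) := by
        intro e he
        by_cases hexy : e = s(x, y)
        · exact Or.inl hexy
        · obtain ⟨w, heq, hxw, hwy, hwb⟩ :=
            hAw e he hexy a0 b0 ha0y ha0b0 ha0nx hb0nx hxb0 hxa0 hf0.1
          exact Or.inr ⟨w, ⟨hxw, hwb.symm⟩, heq.symm⟩
      have himg : ((fun w => s(x, w)) '' {w | G.Adj x w ∧ G.Adj b0 w}).ncard ≤ 1 := by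
        refine le_trans (Set.ncard_image_le (Set.toFinite _)) ?_
        rw [Set.ncard_le_one (Set.toFinite _)]
        rintro a ⟨ha1, ha2⟩ b ⟨hb1, hb2⟩
        exact hcn (Ne.symm hb0nx) ha1 ha2 hb1 hb2
      have := le_trans (Set.ncard_le_ncard hsub (Set.toFinite _)) (Set.ncard_insert_le _ _)
      omega
    have hAone : 1 < CY.ncard → A.ncard ≤ 1 := by
      intro h
      obtain ⟨f1, f2, hf1, hf2, hnef⟩ := (Set.one_lt_ncard_iff (Set.toFinite _)).mp h
      obtain ⟨c1, b1, hf1eq, hc1, ab1, hc1ny, hc1nx, hb1ny, hb1nx, m1, mxb1, mxc1⟩ := getCY f1 hf1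
      obtain ⟨c2, b2, hf2eq, hc2, ab2, hc2ny, hc2nx, hb2ny, hb2nx, m2, mxb2, mxc2⟩ := getCY f2 hf2
      subst hf1eq; subst hf2eq
      have hpairY := side_pair htri hcn hc1 hc2 ab1 ab2 m1 hb1ny m2 hb2ny hnef
        (hconf _ hf1.1 _ hf2.1 hnef)
      have hsub : A ⊆ {s(x, y)} := by
        intro e he
        by_contra hne'
        simp only [Set.mem_singleton_iff] at hne'
        obtain ⟨w, heq, hxw, hwy, hw1⟩ := hAw e he hne' c1 b1 hc1 ab1 hc1nx hb1nx mxb1 mxc1 hf1.1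
        obtain ⟨w', heq', _, _, hw2⟩ := hAw e he hne' c2 b2 hc2 ab2 hc2nx hb2nx mxb2 mxc2 hf2.1
        have hww : w = w' := by
          rcases Sym2.eq_iff.mp (heq.symm.trans heq') with ⟨_, h'⟩ | ⟨h1', h2'⟩
          · exact h'
          · rw [h2', h1']
        subst hww
        rcases hpairY with ⟨hpe, hqn⟩ | ⟨hpn, hqa⟩
        · subst hpe
          have hc1w : c1 ≠ w := by rintro rfl; exact mxc1 hxw
          exact hqn (hcn hc1w ab1 hw1 ab2 hw2)
        · exact htri hqa hw2.symm hw1.symm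
      exact le_trans (Set.ncard_le_ncard hsub (Set.toFinite _)) (by simp)
    rcases le_or_gt CX.ncard 1 with hk | hk <;> rcases le_or_gt CY.ncard 1 with hm | hm
    · omega
    · have := hAone hm; omega
    · have := hBempty hk; omega
    · have h1' := hAone hm; have h2' := hBempty hk; omega

end Key

/-- in `{C₃,C₄}`-free graphs, each edge of a locally optimal induced
matching has at most `2d-1` private conflict edges. -/
theorem stmt8 [Fintype V] (G : SimpleGraph V) (d : ℕ) (hd : 3 ≤ d)
    (hΔ : ∀ v : V, (G.neighborSet v).ncard ≤ d)
    (hC3 : G.CliqueFree 3) (hC4 : C4Free G)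
    (M : Set (Sym2 V)) (hmax : IsMaximalInducedMatching G M) (hstab : LSStable G M)
    (x y : V) (hxy : G.Adj x y) (hmem : s(x, y) ∈ M) :
    (PCSet G M s(x, y)).ncard ≤ 2 * d - 1 := by
  classical
  have htri : ∀ ⦃a b c : V⦄, G.Adj a b → G.Adj b c → G.Adj a c → False := by
    intro a b c hab hbc hac
    exact hC3 {a, b, c} (SimpleGraph.is3Clique_iff.mpr ⟨a, b, c, hab, hac, hbc, rfl⟩)
  have hcn : ∀ ⦃a b u v : V⦄, a ≠ b → G.Adj a u → G.Adj b u → G.Adj a v → G.Adj b v → u = v := by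
    intro a b u v hab hau hbu hav hbv
    by_contra huv
    exact hC4 ⟨a, u, b, v, hau, hbu.symm, hbv, hav.symm,
      fun h => htri h hbu hau, fun h => htri hau h hav, hab, huv⟩
  set F := PCSet G M s(x, y) with hF
  have hFe : F ⊆ G.edgeSet := fun e he => he.1.1
  have hxyF : s(x, y) ∈ F := by
    constructor
    · exact ⟨(G.mem_edgeSet).mpr hxy, x, Sym2.mem_mk_left x y, x, Sym2.mem_mk_left x y,
        Or.inl rfl⟩
    · intro hmem'
      obtain ⟨f, hf, hfc⟩ := Set.mem_iUnion₂.mp hmem'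
      exact hmax.1.2 f hf.1 s(x, y) hmem hf.2 hfc.2
  have hconf : ∀ e ∈ F, ∀ f ∈ F, e ≠ f → Conflict G e f :=
    fun e he f hf hne => (hstab s(x, y) hmem e he f hf hne).2
  by_cases hC : ∃ e ∈ F, x ∉ e ∧ y ∉ e
  · obtain ⟨e, he, hxe, hye⟩ := hC
    have hne : s(x, y) ≠ e := fun h => hxe (h ▸ Sym2.mem_mk_left x y)
    obtain ⟨a, ha, b, hb, hab⟩ := hconf _ hxyF _ he hne
    rw [Sym2.mem_iff] at ha
    have hb' : (∃ c ∈ e, G.Adj x c) ∨ (∃ c ∈ e, G.Adj y c) := by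
      rcases hab with rfl | hadj
      · rcases ha with rfl | rfl
        · exact (hxe hb).elim
        · exact (hye hb).elim
      · rcases ha with rfl | rfl
        · exact Or.inl ⟨b, hb, hadj⟩
        · exact Or.inr ⟨b, hb, hadj⟩
    rcases hb' with h | h
    · exact key1 hd hΔ htri hcn hxy F hFe hxyF hconf ⟨e, he, hxe, hye, h⟩
    · refine key1 hd hΔ htri hcn hxy.symm F hFe ?_ hconf ⟨e, he, hye, hxe, h⟩
      rw [Sym2.eq_swap]
      exact hxyF
  · push_neg at hC
    exact key2 hd hΔ hxy F hFe fun e he => or_iff_not_imp_left.mpr (hC e he)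
end

section
/- Let G be a claw-free (K_{1,3}-free) graph of maximum degree at most d (d ≥ 3), and let M be an induced matching of G that is maximal and stable under the local-search exchange operation. Then |M| ≥ m(G)/(d² + d − 1). -/
open Classical

variable {V : Type*}

open Finset

namespace Stmt11Aux

lemma sym2_exists_rep (e : Sym2 V) : ∃ u v : V, e = s(u, v) :=
  Sym2.ind (f := fun z => ∃ u v : V, z = s(u, v)) (fun u v => ⟨u, v, rfl⟩) e

lemma conflict_symm {G : SimpleGraph V} {e f : Sym2 V} (h : Conflict G e f) : Conflict G f e := by
  obtain ⟨a, ha, b, hb, hab⟩ := h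
  refine ⟨b, hb, a, ha, ?_⟩
  rcases hab with h | h
  · exact Or.inl h.symm
  · exact Or.inr h.symm

lemma conflict_self {G : SimpleGraph V} (e : Sym2 V) : Conflict G e e := by
  obtain ⟨x, y, rfl⟩ := sym2_exists_rep e
  exact ⟨x, Sym2.mem_mk_left x y, x, Sym2.mem_mk_left x y, Or.inl rfl⟩

variable [Fintype V]

noncomputable def EFn (G : SimpleGraph V) : Finset (Sym2 V) :=
  univ.filter (fun g => g ∈ G.edgeSet)

noncomputable def Cfn (G : SimpleGraph V) (e : Sym2 V) : Finset (Sym2 V) :=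
  univ.filter (fun g => g ∈ G.edgeSet ∧ Conflict G e g)

noncomputable def Mfn (M : Set (Sym2 V)) : Finset (Sym2 V) :=
  univ.filter (fun g => g ∈ M)

noncomputable def Pfn (G : SimpleGraph V) (M : Set (Sym2 V)) (e : Sym2 V) : Finset (Sym2 V) :=
  Cfn G e \ ((Mfn M).erase e).biUnion (fun f => Cfn G f)

lemma mem_EFn {G : SimpleGraph V} {g : Sym2 V} : g ∈ EFn G ↔ g ∈ G.edgeSet := by simp [EFn]

lemma mem_Cfn {G : SimpleGraph V} {e g : Sym2 V} :
    g ∈ Cfn G e ↔ g ∈ G.edgeSet ∧ Conflict G e g := by simp [Cfn]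

lemma mem_Mfn {M : Set (Sym2 V)} {g : Sym2 V} : g ∈ Mfn M ↔ g ∈ M := by simp [Mfn]

lemma Pfn_subset_Cfn {G : SimpleGraph V} {M : Set (Sym2 V)} {e : Sym2 V} :
    Pfn G M e ⊆ Cfn G e := Finset.sdiff_subset

lemma Cfn_subset_EFn {G : SimpleGraph V} {e : Sym2 V} : Cfn G e ⊆ EFn G := by
  intro g hg; exact mem_EFn.mpr (mem_Cfn.mp hg).1

lemma nfin_card_le {G : SimpleGraph V} {d : ℕ} (hΔ : ∀ v : V, (G.neighborSet v).ncard ≤ d)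
    (s : V) : (univ.filter (fun w => G.Adj s w)).card ≤ d := by
  have h : G.neighborSet s = ↑(univ.filter (fun w => G.Adj s w)) := by
    ext w; simp [SimpleGraph.neighborSet]
  have hs := hΔ s
  rwa [h, Set.ncard_coe_finset] at hs

lemma edgesAt_card_le (s : V) (F : Finset (Sym2 V)) (T : Finset V)
    (hmem : ∀ g ∈ F, s ∈ g)
    (hT : ∀ (g : Sym2 V), g ∈ F → ∀ w : V, g = s(s, w) → w ∈ T) :
    F.card ≤ T.card := by
  refine Finset.card_le_card_of_injOn
    (fun g => if h : s ∈ g then Sym2.Mem.other h else s) ?_ ?_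
  · intro g hg
    have hs := hmem g hg
    simp only [dif_pos hs]
    exact hT g hg _ (Sym2.other_spec hs).symm
  · intro g1 h1 g2 h2 heq
    have hs1 := hmem g1 (Finset.mem_coe.mp h1)
    have hs2 := hmem g2 (Finset.mem_coe.mp h2)
    simp only [dif_pos hs1, dif_pos hs2] at heq
    have e1 := Sym2.other_spec hs1
    have e2 := Sym2.other_spec hs2
    rw [← e1, ← e2, heq]

lemma cover_lemma {G : SimpleGraph V} {M : Set (Sym2 V)}
    (hmax : IsMaximalInducedMatching G M) :
    EFn G = (Mfn M).biUnion (fun f => Cfn G f) := by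
  apply Finset.Subset.antisymm
  · intro g hg
    rw [mem_EFn] at hg
    by_contra hng
    have hno : ∀ f ∈ M, ¬ Conflict G f g := by
      intro f hf hc
      exact hng (Finset.mem_biUnion.mpr ⟨f, mem_Mfn.mpr hf, mem_Cfn.mpr ⟨hg, hc⟩⟩)
    have hgM : g ∉ M := fun hgm => hno g hgm (conflict_self g)
    have hiM : IsInducedMatching G (insert g M) := by
      constructor
      · intro x hx
        rcases Set.mem_insert_iff.mp hx with rfl | hx
        · exact hg
        · exact hmax.1.1 hx
      · intro e1 h1 e2 h2 hne
        rcases Set.mem_insert_iff.mp h1 with he1 | he1 <;>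
          rcases Set.mem_insert_iff.mp h2 with he2 | he2
        · exact absurd (he1.trans he2.symm) hne
        · subst he1; exact fun hc => hno e2 he2 (conflict_symm hc)
        · subst he2; exact hno e1 he1
        · exact hmax.1.2 e1 he1 e2 he2 hne
    have hMM := hmax.2 _ hiM (Set.subset_insert g M)
    exact hgM (hMM ▸ Set.mem_insert g M)
  · intro g hg
    obtain ⟨f, _, hgf⟩ := Finset.mem_biUnion.mp hg
    exact Cfn_subset_EFn hgf

lemma Pfn_disjoint {G : SimpleGraph V} {M : Set (Sym2 V)} {e1 e2 : Sym2 V}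
    (h2 : e2 ∈ M) (hne : e1 ≠ e2) : Disjoint (Pfn G M e1) (Pfn G M e2) := by
  rw [Finset.disjoint_left]
  intro g hg1 hg2
  rw [Pfn, Finset.mem_sdiff] at hg1 hg2
  apply hg1.2
  exact Finset.mem_biUnion.mpr
    ⟨e2, Finset.mem_erase.mpr ⟨hne.symm, mem_Mfn.mpr h2⟩, hg2.1⟩

lemma claw_private {G : SimpleGraph V} {M : Set (Sym2 V)}
    (hclaw : ClawFree G) (hmax : IsMaximalInducedMatching G M)
    {u v x q1 q2 : V} (he : s(u, v) ∈ M) (hxu : G.Adj x u)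
    (hq1 : G.Adj x q1) (hq2 : G.Adj x q2) (hq : q1 ≠ q2)
    (hu1 : ¬ G.Adj u q1) (hv1 : ¬ G.Adj v q1) (hu1' : q1 ≠ u) (hv1' : q1 ≠ v)
    (hu2 : ¬ G.Adj u q2) (hv2 : ¬ G.Adj v q2) (hu2' : q2 ≠ u) (hv2' : q2 ≠ v)
    (hp1 : s(x, q1) ∈ Pfn G M s(u, v)) (hp2 : s(x, q2) ∈ Pfn G M s(u, v)) : False := by
  have hadj : G.Adj q1 q2 := by
    by_contra hna
    exact hclaw ⟨x, u, q1, q2, hxu, hq1, hq2, hu1, hu2, hna, hu1'.symm, hu2'.symm, hq⟩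
  have hedge : s(q1, q2) ∈ G.edgeSet := G.mem_edgeSet.mpr hadj
  have hcc : ¬ Conflict G s(u, v) s(q1, q2) := by
    rintro ⟨a, ha, b, hb, hab⟩
    rw [Sym2.mem_iff] at ha hb
    rcases ha with rfl | rfl <;> rcases hb with rfl | rfl <;> rcases hab with h | h <;>
      first
        | exact hu1' h.symm | exact hu1 h | exact hv1' h.symm | exact hv1 h
        | exact hu2' h.symm | exact hu2 h | exact hv2' h.symm | exact hv2 h
  have hgE : s(q1, q2) ∈ EFn G := mem_EFn.mpr hedge
  rw [cover_lemma hmax] at hgE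
  obtain ⟨f, hfM, hfC⟩ := Finset.mem_biUnion.mp hgE
  have hfe : f ≠ s(u, v) := by
    rintro rfl; exact hcc (mem_Cfn.mp hfC).2
  obtain ⟨a, haf, b, hb, hab⟩ := (mem_Cfn.mp hfC).2
  rw [Sym2.mem_iff] at hb
  rcases hb with rfl | rfl
  · have hconf : Conflict G f s(x, b) := ⟨a, haf, b, Sym2.mem_mk_right x b, hab⟩
    have : s(x, b) ∉ Pfn G M s(u, v) := by
      intro hP
      exact (Finset.mem_sdiff.mp hP).2 (Finset.mem_biUnion.mpr
        ⟨f, Finset.mem_erase.mpr ⟨hfe, hfM⟩,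
          mem_Cfn.mpr ⟨G.mem_edgeSet.mpr hq1, hconf⟩⟩)
    exact this hp1
  · have hconf : Conflict G f s(x, b) := ⟨a, haf, b, Sym2.mem_mk_right x b, hab⟩
    have : s(x, b) ∉ Pfn G M s(u, v) := by
      intro hP
      exact (Finset.mem_sdiff.mp hP).2 (Finset.mem_biUnion.mpr
        ⟨f, Finset.mem_erase.mpr ⟨hfe, hfM⟩,
          mem_Cfn.mpr ⟨G.mem_edgeSet.mpr hq2, hconf⟩⟩)
    exact this hp2


lemma local_bound {G : SimpleGraph V} {M : Set (Sym2 V)} {d : ℕ}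
    (hΔ : ∀ v : V, (G.neighborSet v).ncard ≤ d) (hclaw : ClawFree G)
    (hmax : IsMaximalInducedMatching G M) {e : Sym2 V} (he : e ∈ M) :
    (Cfn G e).card + (Pfn G M e).card + 2 ≤ 2 * (d ^ 2 + d) := by
  obtain ⟨u, v, rfl⟩ := sym2_exists_rep e
  have huv : G.Adj u v := G.mem_edgeSet.mp (hmax.1.1 he)
  set Nu := univ.filter (fun w => G.Adj u w) with hNu
  set Nv := univ.filter (fun w => G.Adj v w) with hNv
  set S' := ((Nu ∪ Nv).erase u).erase v with hS'
  have hmemS' : ∀ x : V, x ∈ S' ↔ ((G.Adj u x ∨ G.Adj v x) ∧ x ≠ u ∧ x ≠ v) := by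
    intro x
    simp only [hS', Finset.mem_erase, Finset.mem_union, hNu, hNv, Finset.mem_filter,
      Finset.mem_univ, true_and]
    tauto
  have hS'card : S'.card + 2 ≤ 2 * d := by
    have h1 : S' ⊆ (Nu.erase v) ∪ (Nv.erase u) := by
      intro x hx
      rw [hmemS'] at hx
      rcases hx.1 with h | h
      · exact Finset.mem_union_left _ (Finset.mem_erase.mpr ⟨hx.2.2, by simp [hNu, h]⟩)
      · exact Finset.mem_union_right _ (Finset.mem_erase.mpr ⟨hx.2.1, by simp [hNv, h]⟩)
    have h2 := Finset.card_le_card h1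
    have h3 := Finset.card_union_le (Nu.erase v) (Nv.erase u)
    have h4 : v ∈ Nu := by simp [hNu, huv]
    have h5 : u ∈ Nv := by simp [hNv, huv.symm]
    have h6 := Finset.card_erase_of_mem h4
    have h7 := Finset.card_erase_of_mem h5
    have h8 : 1 ≤ Nu.card := Finset.card_pos.mpr ⟨v, h4⟩
    have h9 : 1 ≤ Nv.card := Finset.card_pos.mpr ⟨u, h5⟩
    have h10 := nfin_card_le hΔ u
    have h11 := nfin_card_le hΔ v
    rw [← hNu] at h10
    rw [← hNv] at h11
    omega
  set C := Cfn G s(u, v) with hC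
  set D0 := C.filter (fun g => u ∈ g ∨ v ∈ g) with hD0
  set D12 := C.filter (fun g => ¬ (u ∈ g ∨ v ∈ g)) with hD12
  have hsplit : D0.card + D12.card = C.card :=
    Finset.card_filter_add_card_filter_not _
  -- Bound on D0
  have hD0card : D0.card + 1 ≤ 2 * d := by
    set Eu := univ.filter (fun g : Sym2 V => g ∈ G.edgeSet ∧ u ∈ g) with hEu
    set Ev := univ.filter (fun g : Sym2 V => g ∈ G.edgeSet ∧ v ∈ g) with hEv
    have hsub : D0 ⊆ Eu ∪ Ev := by
      intro g hg
      rw [hD0, Finset.mem_filter] at hg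
      have hgE : g ∈ G.edgeSet := (mem_Cfn.mp hg.1).1
      rcases hg.2 with h | h
      · exact Finset.mem_union_left _ (by simp [hEu, hgE, h])
      · exact Finset.mem_union_right _ (by simp [hEv, hgE, h])
    have hEuc : Eu.card ≤ d := by
      refine le_trans (edgesAt_card_le u Eu Nu ?_ ?_) (by rw [hNu] at *; exact nfin_card_le hΔ u)
      · intro g hg; exact ((Finset.mem_filter.mp hg).2).2
      · intro g hg w hw
        have hgE : g ∈ G.edgeSet := ((Finset.mem_filter.mp hg).2).1
        rw [hw, SimpleGraph.mem_edgeSet] at hgE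
        simp [hNu, hgE]
    have hEvc : Ev.card ≤ d := by
      refine le_trans (edgesAt_card_le v Ev Nv ?_ ?_) (by rw [hNv] at *; exact nfin_card_le hΔ v)
      · intro g hg; exact ((Finset.mem_filter.mp hg).2).2
      · intro g hg w hw
        have hgE : g ∈ G.edgeSet := ((Finset.mem_filter.mp hg).2).1
        rw [hw, SimpleGraph.mem_edgeSet] at hgE
        simp [hNv, hgE]
    have hmemE : s(u, v) ∈ Eu ∩ Ev := by
      have hE : s(u, v) ∈ G.edgeSet := hmax.1.1 he
      simp [hEu, hEv, hE]
    have hint : 1 ≤ (Eu ∩ Ev).card := Finset.card_pos.mpr ⟨_, hmemE⟩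
    have huni := Finset.card_union_add_card_inter Eu Ev
    have hle := Finset.card_le_card hsub
    omega
  set D1 := D12.filter (fun g => ∀ x ∈ g, x ∈ S') with hD1
  set D2 := D12.filter (fun g => ¬ ∀ x ∈ g, x ∈ S') with hD2
  have hsplit2 : D1.card + D2.card = D12.card :=
    Finset.card_filter_add_card_filter_not _
  have hD2subD12 : D2 ⊆ D12 := Finset.filter_subset _ _
  -- every D12 edge has an endpoint in S'
  have hD12mem : ∀ g ∈ D12, ∃ q : V, q ∈ g ∧ q ∈ S' := by
    intro g hg
    rw [hD12, Finset.mem_filter] at hg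
    obtain ⟨hgC, hguv⟩ := hg
    obtain ⟨_, hconf⟩ := mem_Cfn.mp hgC
    obtain ⟨a, ha, b, hb, hab⟩ := hconf
    rw [Sym2.mem_iff] at ha
    have hbu : b ≠ u := fun h => hguv (Or.inl (h ▸ hb))
    have hbv : b ≠ v := fun h => hguv (Or.inr (h ▸ hb))
    rcases hab with heq | hadj
    · rcases ha with h | h
      · exact absurd (heq.symm.trans h) hbu
      · exact absurd (heq.symm.trans h) hbv
    · refine ⟨b, hb, (hmemS' b).mpr ⟨?_, hbu, hbv⟩⟩
      rcases ha with rfl | rfl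
      · exact Or.inl hadj
      · exact Or.inr hadj
  -- counting: sum over S' of incidences
  have hcnt1 : ∀ g ∈ D12, (if g ∈ D1 then 2 else 1) ≤ (S'.filter (fun x => x ∈ g)).card := by
    intro g hg
    by_cases hgD1 : g ∈ D1
    · rw [if_pos hgD1]
      obtain ⟨a, b, rfl⟩ := sym2_exists_rep g
      have hgE : s(a, b) ∈ G.edgeSet := (mem_Cfn.mp (Finset.mem_filter.mp hg).1).1
      have hab : a ≠ b := (G.mem_edgeSet.mp hgE).ne
      have hpred := (Finset.mem_filter.mp hgD1).2
      have hain : a ∈ S'.filter (fun x => x ∈ s(a, b)) :=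
        Finset.mem_filter.mpr ⟨hpred a (Sym2.mem_mk_left a b), Sym2.mem_mk_left a b⟩
      have hbin : b ∈ S'.filter (fun x => x ∈ s(a, b)) :=
        Finset.mem_filter.mpr ⟨hpred b (Sym2.mem_mk_right a b), Sym2.mem_mk_right a b⟩
      calc 2 = ({a, b} : Finset V).card := (Finset.card_pair hab).symm
        _ ≤ _ := Finset.card_le_card (by
            intro x hx
            rcases Finset.mem_insert.mp hx with rfl | hx
            · exact hain
            · rw [Finset.mem_singleton] at hx; subst hx; exact hbin)
    · rw [if_neg hgD1]
      obtain ⟨q, hq, hqS⟩ := hD12mem g hg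
      exact Finset.card_pos.mpr ⟨q, Finset.mem_filter.mpr ⟨hqS, hq⟩⟩
  have hsum1 : D12.card + D1.card ≤ ∑ g ∈ D12, (S'.filter (fun x => x ∈ g)).card := by
    have hle := Finset.sum_le_sum hcnt1
    have heval : (∑ g ∈ D12, (if g ∈ D1 then 2 else 1)) = D12.card + D1.card := by
      have hsp : ∀ g ∈ D12, (if g ∈ D1 then 2 else 1) = 1 + (if g ∈ D1 then 1 else 0) := by
        intro g _; split <;> rfl
      rw [Finset.sum_congr rfl hsp, Finset.sum_add_distrib, Finset.sum_const, smul_eq_mul,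
        mul_one]
      congr 1
      rw [← Finset.card_filter, Finset.filter_mem_eq_inter,
        Finset.inter_eq_right.mpr (Finset.filter_subset _ _)]
    omega
  have hswap : (∑ g ∈ D12, (S'.filter (fun x => x ∈ g)).card)
      = ∑ x ∈ S', (D12.filter (fun g => x ∈ g)).card := by
    simp only [Finset.card_filter]
    exact Finset.sum_comm
  have hAt : ∀ x ∈ S', (D12.filter (fun g => x ∈ g)).card + 1 ≤ d := by
    intro x hx
    rw [hmemS'] at hx
    obtain ⟨hadjx, hxu, hxv⟩ := hx
    obtain ⟨t, hxt, ht⟩ : ∃ t : V, G.Adj x t ∧ (t = u ∨ t = v) := by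
      rcases hadjx with h | h
      · exact ⟨u, h.symm, Or.inl rfl⟩
      · exact ⟨v, h.symm, Or.inr rfl⟩
    have hcard : (D12.filter (fun g => x ∈ g)).card
        ≤ ((univ.filter (fun w => G.Adj x w)).erase t).card := by
      refine edgesAt_card_le x _ _ ?_ ?_
      · intro g hg; exact (Finset.mem_filter.mp hg).2
      · intro g hg w hw
        have hgD12 := (Finset.mem_filter.mp hg).1
        have hnuv := (Finset.mem_filter.mp hgD12).2
        have hgE : g ∈ G.edgeSet := (mem_Cfn.mp (Finset.mem_filter.mp hgD12).1).1
        rw [hw, SimpleGraph.mem_edgeSet] at hgE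
        refine Finset.mem_erase.mpr ⟨?_, by simp [hgE]⟩
        rintro rfl
        rcases ht with rfl | rfl
        · exact hnuv (Or.inl (by rw [hw]; exact Sym2.mem_mk_right _ _))
        · exact hnuv (Or.inr (by rw [hw]; exact Sym2.mem_mk_right _ _))
    have htN : t ∈ univ.filter (fun w => G.Adj x w) := by simp [hxt]
    have hxe := Finset.card_erase_of_mem htN
    have hdx := nfin_card_le hΔ x
    have hpos : 1 ≤ (univ.filter (fun w => G.Adj x w)).card := Finset.card_pos.mpr ⟨t, htN⟩
    omega
  have hsum2 : (∑ x ∈ S', ((D12.filter (fun g => x ∈ g)).card + 1)) ≤ S'.card * d := by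
    have := Finset.sum_le_card_nsmul S' (fun x => (D12.filter (fun g => x ∈ g)).card + 1) d hAt
    rwa [smul_eq_mul] at this
  have hF2 : D12.card + D1.card + S'.card ≤ S'.card * d := by
    have hexp : (∑ x ∈ S', ((D12.filter (fun g => x ∈ g)).card + 1))
        = (∑ x ∈ S', (D12.filter (fun g => x ∈ g)).card) + S'.card := by
      rw [Finset.sum_add_distrib, Finset.sum_const, smul_eq_mul, mul_one]
    have h1 := hsum1
    rw [hswap] at h1
    linarith
  set P := Pfn G M s(u, v) with hP
  have hPsub : P ⊆ (D0 ∪ D1) ∪ (P ∩ D2) := by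
    intro g hg
    have hgC : g ∈ C := Pfn_subset_Cfn hg
    by_cases h0 : u ∈ g ∨ v ∈ g
    · exact Finset.mem_union_left _ (Finset.mem_union_left _ (Finset.mem_filter.mpr ⟨hgC, h0⟩))
    · have hgD12 : g ∈ D12 := Finset.mem_filter.mpr ⟨hgC, h0⟩
      by_cases h1 : ∀ x ∈ g, x ∈ S'
      · exact Finset.mem_union_left _
          (Finset.mem_union_right _ (Finset.mem_filter.mpr ⟨hgD12, h1⟩))
      · exact Finset.mem_union_right _
          (Finset.mem_inter.mpr ⟨hg, Finset.mem_filter.mpr ⟨hgD12, h1⟩⟩)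
  have hPcard : P.card ≤ D0.card + D1.card + (P ∩ D2).card := by
    have h1 := Finset.card_le_card hPsub
    have h2 := Finset.card_union_le (D0 ∪ D1) (P ∩ D2)
    have h3 := Finset.card_union_le D0 D1
    omega
  -- the claw-free private bound
  have hPD2 : (P ∩ D2).card ≤ S'.card := by
    refine Finset.card_le_card_of_injOn
      (fun g => if h : ∃ x : V, x ∈ S' ∧ x ∈ g then h.choose else u) ?_ ?_
    · intro g hg
      have hgD2 : g ∈ D2 := (Finset.mem_inter.mp hg).2
      obtain ⟨q, hq, hqS⟩ := hD12mem g (hD2subD12 hgD2)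
      have hex : ∃ x : V, x ∈ S' ∧ x ∈ g := ⟨q, hqS, hq⟩
      simp only [dif_pos hex]
      exact hex.choose_spec.1
    · intro g1 hg1 g2 hg2 heq
      by_contra hne
      rw [Finset.mem_coe, Finset.mem_inter] at hg1 hg2
      obtain ⟨q1', hq1', hq1S'⟩ := hD12mem g1 (hD2subD12 hg1.2)
      obtain ⟨q2', hq2', hq2S'⟩ := hD12mem g2 (hD2subD12 hg2.2)
      have hex1 : ∃ x : V, x ∈ S' ∧ x ∈ g1 := ⟨q1', hq1S', hq1'⟩
      have hex2 : ∃ x : V, x ∈ S' ∧ x ∈ g2 := ⟨q2', hq2S', hq2'⟩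
      simp only [dif_pos hex1, dif_pos hex2] at heq
      have hxS : hex1.choose ∈ S' := hex1.choose_spec.1
      have hxg1 : hex1.choose ∈ g1 := hex1.choose_spec.2
      have hxg2 : hex1.choose ∈ g2 := by rw [heq]; exact hex2.choose_spec.2
      set x := hex1.choose with hxdef
      have hrep1 := Sym2.other_spec hxg1
      have hrep2 := Sym2.other_spec hxg2
      set q1 := Sym2.Mem.other hxg1 with hq1def
      set q2 := Sym2.Mem.other hxg2 with hq2def
      have hqne : q1 ≠ q2 := by
        intro h
        apply hne
        rw [← hrep1, ← hrep2, h]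
      -- properties of q i
      have hprop : ∀ (g : Sym2 V) (q : V), g ∈ P ∩ D2 → s(x, q) = g →
          G.Adj x q ∧ ¬ G.Adj u q ∧ ¬ G.Adj v q ∧ q ≠ u ∧ q ≠ v ∧ s(x, q) ∈ P := by
        intro g q hgmem hrep
        have hgD2 : g ∈ D2 := (Finset.mem_inter.mp hgmem).2
        have hgD12 : g ∈ D12 := hD2subD12 hgD2
        have hnuv := (Finset.mem_filter.mp hgD12).2
        have hgE : g ∈ G.edgeSet := (mem_Cfn.mp (Finset.mem_filter.mp hgD12).1).1
        have hadjxq : G.Adj x q := by rw [← hrep] at hgE; exact G.mem_edgeSet.mp hgE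
        have hqu : q ≠ u := by rintro rfl; exact hnuv (Or.inl (by rw [← hrep]; exact Sym2.mem_mk_right _ _))
        have hqv : q ≠ v := by rintro rfl; exact hnuv (Or.inr (by rw [← hrep]; exact Sym2.mem_mk_right _ _))
        have hqnS : q ∉ S' := by
          intro hqS
          have hall := (Finset.mem_filter.mp hgD2).2
          apply hall
          intro y hy
          rw [← hrep, Sym2.mem_iff] at hy
          rcases hy with rfl | rfl
          · exact hxS
          · exact hqS
        have hnadj : ¬ G.Adj u q ∧ ¬ G.Adj v q := by
          constructor
          · intro h; exact hqnS ((hmemS' q).mpr ⟨Or.inl h, hqu, hqv⟩)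
          · intro h; exact hqnS ((hmemS' q).mpr ⟨Or.inr h, hqu, hqv⟩)
        exact ⟨hadjxq, hnadj.1, hnadj.2, hqu, hqv, by rw [hrep]; exact (Finset.mem_inter.mp hgmem).1⟩
      obtain ⟨hadj1, hu1, hv1, hqu1, hqv1, hp1⟩ := hprop g1 q1 (Finset.mem_inter.mpr hg1) hrep1
      obtain ⟨hadj2, hu2, hv2, hqu2, hqv2, hp2⟩ := hprop g2 q2 (Finset.mem_inter.mpr hg2) hrep2
      have hxS' := (hmemS' x).mp hxS
      rcases hxS'.1 with hax | hax
      · exact claw_private hclaw hmax he hax.symm hadj1 hadj2 hqne hu1 hv1 hqu1 hqv1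
          hu2 hv2 hqu2 hqv2 hp1 hp2
      · have he' : s(v, u) ∈ M := by rw [Sym2.eq_swap]; exact he
        have hp1' : s(x, q1) ∈ Pfn G M s(v, u) := by rw [Sym2.eq_swap]; exact hp1
        have hp2' : s(x, q2) ∈ Pfn G M s(v, u) := by rw [Sym2.eq_swap]; exact hp2
        exact claw_private hclaw hmax he' hax.symm hadj1 hadj2 hqne hv1 hu1 hqv1 hqu1
          hv2 hu2 hqv2 hqu2 hp1' hp2'
  -- final arithmetic
  have hm : (S'.card + 2) * d ≤ (2 * d) * d := Nat.mul_le_mul_right d hS'card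
  have hm' : S'.card * d + 2 * d ≤ 2 * d ^ 2 := by
    have h2d : (2 * d) * d = 2 * d ^ 2 := by ring
    rw [add_mul] at hm
    omega
  linarith [hD0card, hF2, hS'card, hPcard, hPD2, hsplit, hsplit2, hm']

end Stmt11Aux

open Stmt11Aux in
theorem stmt11_main [Fintype V] (G : SimpleGraph V) (d : ℕ) (hd : 3 ≤ d)
    (hΔ : ∀ v : V, (G.neighborSet v).ncard ≤ d) (hclaw : ClawFree G)
    (M : Set (Sym2 V)) (hmax : IsMaximalInducedMatching G M) :
    (M.ncard : ℝ) ≥ (G.edgeSet.ncard : ℝ) / ((d : ℝ) ^ 2 + (d : ℝ) - 1) := by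
  classical
  have hcov := cover_lemma hmax
  set Mf := Mfn M with hMf
  set PU := Mf.biUnion (fun f => Pfn G M f) with hPU
  have hPUsub : PU ⊆ EFn G := by
    intro g hg
    obtain ⟨f, _, hgf⟩ := Finset.mem_biUnion.mp hg
    exact Cfn_subset_EFn (Pfn_subset_Cfn hgf)
  have h1 : ((EFn G) \ PU).card + PU.card = (EFn G).card :=
    Finset.card_sdiff_add_card_eq_card hPUsub
  have h2 : PU.card = ∑ f ∈ Mf, (Pfn G M f).card :=
    Finset.card_biUnion (fun x _ y hy hxy => Pfn_disjoint (mem_Mfn.mp hy) hxy)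
  have hkey : ∀ g ∈ (EFn G) \ PU,
      2 ≤ (Mf.filter (fun f => g ∈ Cfn G f \ Pfn G M f)).card := by
    intro g hg
    rw [Finset.mem_sdiff] at hg
    obtain ⟨hgE, hgPU⟩ := hg
    have hgPU' : ∀ f ∈ Mf, g ∉ Pfn G M f := by
      intro f hf hPm
      exact hgPU (Finset.mem_biUnion.mpr ⟨f, hf, hPm⟩)
    obtain ⟨f1, hf1, hgf1⟩ : ∃ f ∈ Mf, g ∈ Cfn G f := by
      have hh := hgE
      rw [hcov] at hh
      exact Finset.mem_biUnion.mp hh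
    have hbi : g ∈ ((Mfn M).erase f1).biUnion (fun f => Cfn G f) := by
      by_contra hn
      exact hgPU' f1 hf1 (Finset.mem_sdiff.mpr ⟨hgf1, hn⟩)
    obtain ⟨f2, hf2, hgf2⟩ := Finset.mem_biUnion.mp hbi
    have hf2' : f2 ∈ Mf := (Finset.mem_erase.mp hf2).2
    have hne : f2 ≠ f1 := (Finset.mem_erase.mp hf2).1
    have hm1 : f1 ∈ Mf.filter (fun f => g ∈ Cfn G f \ Pfn G M f) :=
      Finset.mem_filter.mpr ⟨hf1, Finset.mem_sdiff.mpr ⟨hgf1, hgPU' f1 hf1⟩⟩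
    have hm2 : f2 ∈ Mf.filter (fun f => g ∈ Cfn G f \ Pfn G M f) :=
      Finset.mem_filter.mpr ⟨hf2', Finset.mem_sdiff.mpr ⟨hgf2, hgPU' f2 hf2'⟩⟩
    calc 2 = ({f1, f2} : Finset (Sym2 V)).card := (Finset.card_pair hne.symm).symm
      _ ≤ _ := Finset.card_le_card (by
          intro z hz
          rcases Finset.mem_insert.mp hz with rfl | hz
          · exact hm1
          · rw [Finset.mem_singleton] at hz; subst hz; exact hm2)
  have h3 : 2 * ((EFn G) \ PU).card ≤ ∑ f ∈ Mf, (Cfn G f \ Pfn G M f).card := by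
    calc 2 * ((EFn G) \ PU).card = ∑ _g ∈ (EFn G) \ PU, 2 := by
          rw [Finset.sum_const, smul_eq_mul, mul_comm]
      _ ≤ ∑ g ∈ (EFn G) \ PU, (Mf.filter (fun f => g ∈ Cfn G f \ Pfn G M f)).card :=
          Finset.sum_le_sum hkey
      _ ≤ ∑ g ∈ (univ : Finset (Sym2 V)),
            (Mf.filter (fun f => g ∈ Cfn G f \ Pfn G M f)).card :=
          Finset.sum_le_sum_of_subset (Finset.subset_univ _)
      _ = ∑ f ∈ Mf, ((univ : Finset (Sym2 V)).filter
            (fun g => g ∈ Cfn G f \ Pfn G M f)).card := by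
          simp only [Finset.card_filter]
          exact Finset.sum_comm
      _ = ∑ f ∈ Mf, (Cfn G f \ Pfn G M f).card := by
          refine Finset.sum_congr rfl (fun f _ => ?_)
          rw [Finset.filter_univ_mem]
  have h4 : ∀ f ∈ Mf, (Cfn G f \ Pfn G M f).card + (Pfn G M f).card = (Cfn G f).card :=
    fun f _ => Finset.card_sdiff_add_card_eq_card Pfn_subset_Cfn
  have h5 : ∀ f ∈ Mf, (Cfn G f).card + (Pfn G M f).card + 2 ≤ 2 * (d ^ 2 + d) :=
    fun f hf => local_bound hΔ hclaw hmax (mem_Mfn.mp hf)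
  have e1 : (∑ f ∈ Mf, (Cfn G f \ Pfn G M f).card) + 2 * (∑ f ∈ Mf, (Pfn G M f).card)
      + 2 * Mf.card ≤ Mf.card * (2 * (d ^ 2 + d)) := by
    have hsb : ∀ f ∈ Mf,
        (Cfn G f \ Pfn G M f).card + 2 * (Pfn G M f).card + 2 ≤ 2 * (d ^ 2 + d) := by
      intro f hf
      have h4' := h4 f hf
      have h5' := h5 f hf
      omega
    have hs := Finset.sum_le_sum hsb
    rw [Finset.sum_const, smul_eq_mul] at hs
    rw [Finset.sum_add_distrib, Finset.sum_add_distrib, ← Finset.mul_sum,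
      Finset.sum_const, smul_eq_mul] at hs
    linarith
  have h6 : 2 * (EFn G).card + 2 * Mf.card ≤ Mf.card * (2 * (d ^ 2 + d)) := by
    linarith
  -- cast to ℝ
  have hMcard : M.ncard = Mf.card := by
    have hcoe : (↑Mf : Set (Sym2 V)) = M := by
      ext g; simp [hMf, Mfn]
    rw [← hcoe, Set.ncard_coe_finset]
  have hEcard : G.edgeSet.ncard = (EFn G).card := by
    have hcoe : (↑(EFn G) : Set (Sym2 V)) = G.edgeSet := by
      ext g; simp [EFn]
    rw [← hcoe, Set.ncard_coe_finset]
  have hdR : (3 : ℝ) ≤ (d : ℝ) := by exact_mod_cast hd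
  have hDpos : (0 : ℝ) < (d : ℝ) ^ 2 + (d : ℝ) - 1 := by nlinarith
  rw [ge_iff_le, div_le_iff₀ hDpos]
  rw [hMcard, hEcard]
  have h6' : (2 : ℝ) * ((EFn G).card : ℝ) + 2 * (Mf.card : ℝ)
      ≤ (Mf.card : ℝ) * (2 * ((d : ℝ) ^ 2 + (d : ℝ))) := by
    exact_mod_cast h6
  have hring : (Mf.card : ℝ) * (2 * ((d : ℝ) ^ 2 + (d : ℝ)))
      = 2 * ((Mf.card : ℝ) * ((d : ℝ) ^ 2 + (d : ℝ) - 1)) + 2 * (Mf.card : ℝ) := by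
    ring
  rw [hring] at h6'
  linarith


/-- lower bound for locally optimal induced matchings in claw-free graphs. -/
theorem stmt11 [Fintype V] (G : SimpleGraph V) (d : ℕ) (hd : 3 ≤ d)
    (hΔ : ∀ v : V, (G.neighborSet v).ncard ≤ d) (hclaw : ClawFree G)
    (M : Set (Sym2 V)) (hmax : IsMaximalInducedMatching G M) (hstab : LSStable G M) :
    (M.ncard : ℝ) ≥ (G.edgeSet.ncard : ℝ) / ((d : ℝ) ^ 2 + (d : ℝ) - 1) := by
  exact stmt11_main G d hd hΔ hclaw M hmax
end

section
/- If G is a claw-free graph of maximum degree at most d for some d ≥ 3, and M is a maximal induced matching of G, then |M| ≥ m(G) / ((7/6)d² + d). -/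
open Classical

variable {V : Type*}

lemma conflict_self (G : SimpleGraph V) (e : Sym2 V) : Conflict G e e := by
  induction e using Sym2.ind with
  | _ a b => exact ⟨a, Sym2.mem_mk_left a b, a, Sym2.mem_mk_left a b, Or.inl rfl⟩

lemma coverage {G : SimpleGraph V} {M : Set (Sym2 V)}
    (hmax : IsMaximalInducedMatching G M) {f : Sym2 V} (hf : f ∈ G.edgeSet) :
    ∃ e ∈ M, f ∈ CSet G e := by
  by_contra hcon
  push_neg at hcon
  have hnc : ∀ e ∈ M, ¬ Conflict G e f := fun e he hc => hcon e he ⟨hf, hc⟩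
  have hfM : f ∉ M := fun h => hnc f h (conflict_self G f)
  have hM' : IsInducedMatching G (insert f M) := by
    constructor
    · intro x hx
      rcases Set.mem_insert_iff.1 hx with rfl | hx
      · exact hf
      · exact hmax.1.1 hx
    · intro e he e' he' hne
      rcases Set.mem_insert_iff.1 he with h1 | h1
      · rcases Set.mem_insert_iff.1 he' with h2 | h2
        · exact absurd (h1.trans h2.symm) hne
        · exact fun hc => hnc e' h2 (conflict_symm (h1 ▸ hc))
      · rcases Set.mem_insert_iff.1 he' with h2 | h2
        · exact fun hc => hnc e h1 (h2 ▸ hc)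
        · exact hmax.1.2 e h1 e' h2 hne
  have heq := hmax.2 _ hM' (Set.subset_insert f M)
  exact hfM (heq ▸ Set.mem_insert f M)

lemma claw_cons {G : SimpleGraph V} (hclaw : ClawFree G) {x a b c : V}
    (hxa : G.Adj x a) (hxb : G.Adj x b) (hxc : G.Adj x c)
    (hab : ¬ G.Adj a b) (hac : ¬ G.Adj a c)
    (h1 : a ≠ b) (h2 : a ≠ c) (h3 : b ≠ c) : G.Adj b c := by
  by_contra h
  exact hclaw ⟨x, a, b, c, hxa, hxb, hxc, hab, hac, h, h1, h2, h3⟩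

lemma my_arith (d k l c w t m2 sU sV sK sL sC cq : ℝ)
    (A2 : t + m2 ≤ (2+k+l+c) * d)
    (A3 : sU+sV+sK+sL+sC ≤ 2*m2)
    (A4 : 1+k+c ≤ sU) (A4' : 1+l+c ≤ sV)
    (A5 : k*(k+c) ≤ sK + k*w) (A6 : l*(l+c) ≤ sL + l*w)
    (A7 : cq*2 + w*(w+1) ≤ sC) (hcw : cq + w = c)
    (A8 : k+c+1 ≤ d) (A9 : l+c+1 ≤ d)
    (hk : 0 ≤ k) (hl : 0 ≤ l) (hcq : 0 ≤ cq) (hw : 0 ≤ w) (hd : 3 ≤ d) :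
    t ≤ 7/6*d^2 + d := by
  have hc : 0 ≤ c := by linarith
  nlinarith [sq_nonneg (d - 3*w), mul_nonneg hw hcq,
    mul_nonneg hw (by linarith : (0:ℝ) ≤ d - 1 - c - k),
    mul_nonneg hw (by linarith : (0:ℝ) ≤ d - 1 - c - l),
    sq_nonneg (d - 1 - c - k), sq_nonneg (d - 1 - c - l),
    mul_nonneg hc (by linarith : (0:ℝ) ≤ d - 1 - c - k),
    mul_nonneg hc (by linarith : (0:ℝ) ≤ d - 1 - c - l)]

lemma key [Fintype V] (G : SimpleGraph V) (d : ℕ) (hd : 3 ≤ d)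
    (hΔ : ∀ v : V, (G.neighborSet v).ncard ≤ d) (hclaw : ClawFree G)
    {u v : V} (huv : G.Adj u v) :
    ((CSet G s(u, v)).ncard : ℝ) ≤ 7 / 6 * (d : ℝ) ^ 2 + (d : ℝ) := by
  classical
  set Nu := G.neighborFinset u with hNu
  set Nv := G.neighborFinset v with hNv
  set S : Finset V := Nu ∪ Nv with hSdef
  set K : Finset V := Nu \ (Nv ∪ {v}) with hKdef
  set L : Finset V := Nv \ (Nu ∪ {u}) with hLdef
  set C : Finset V := Nu ∩ Nv with hCdef
  -- basic membership facts
  have memNu : ∀ x, x ∈ Nu ↔ G.Adj u x := fun x => G.mem_neighborFinset u x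
  have memNv : ∀ x, x ∈ Nv ↔ G.Adj v x := fun x => G.mem_neighborFinset v x
  have hune : u ≠ v := G.ne_of_adj huv
  have huNv : u ∈ Nv := (memNv u).2 huv.symm
  have hvNu : v ∈ Nu := (memNu v).2 huv
  have huNu : u ∉ Nu := fun h => G.irrefl ((memNu u).1 h)
  have hvNv : v ∉ Nv := fun h => G.irrefl ((memNv v).1 h)
  have huS : u ∈ S := Finset.mem_union_right _ huNv
  have hvS : v ∈ S := Finset.mem_union_left _ hvNu
  have hKNu : ∀ x ∈ K, x ∈ Nu := fun x hx => (Finset.mem_sdiff.1 hx).1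
  have hKNv : ∀ x ∈ K, x ∉ Nv := fun x hx h =>
    (Finset.mem_sdiff.1 hx).2 (Finset.mem_union_left _ h)
  have hKv : ∀ x ∈ K, x ≠ v := fun x hx h =>
    (Finset.mem_sdiff.1 hx).2 (Finset.mem_union_right _ (by simp [h]))
  have hLNv : ∀ x ∈ L, x ∈ Nv := fun x hx => (Finset.mem_sdiff.1 hx).1
  have hLNu : ∀ x ∈ L, x ∉ Nu := fun x hx h =>
    (Finset.mem_sdiff.1 hx).2 (Finset.mem_union_left _ h)
  have hLu : ∀ x ∈ L, x ≠ u := fun x hx h =>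
    (Finset.mem_sdiff.1 hx).2 (Finset.mem_union_right _ (by simp [h]))
  have hCNu : ∀ x ∈ C, x ∈ Nu := fun x hx => (Finset.mem_inter.1 hx).1
  have hCNv : ∀ x ∈ C, x ∈ Nv := fun x hx => (Finset.mem_inter.1 hx).2
  have huK : u ∉ K := fun h => huNu (hKNu u h)
  have huC : u ∉ C := fun h => huNu (hCNu u h)
  have huL : u ∉ L := fun h => hLu u h rfl
  have hvK : v ∉ K := fun h => hKv v h rfl
  have hvL : v ∉ L := fun h => hvNv (hLNv v h)
  have hvC : v ∉ C := fun h => hvNv (hCNv v h)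
  have hKS : K ⊆ S := fun x hx => Finset.mem_union_left _ (hKNu x hx)
  have hLS : L ⊆ S := fun x hx => Finset.mem_union_right _ (hLNv x hx)
  have hCS : C ⊆ S := fun x hx => Finset.mem_union_left _ (hCNu x hx)
  have hKC : Disjoint K C := Finset.disjoint_left.2 fun x hxK hxC => hKNv x hxK (hCNv x hxC)
  have hKL : Disjoint K L := Finset.disjoint_left.2 fun x hxK hxL => hLNu x hxL (hKNu x hxK)
  have hLC : Disjoint L C := Finset.disjoint_left.2 fun x hxL hxC => hLNu x hxL (hCNu x hxC)
  set k := K.card with hk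
  set l := L.card with hl
  set c := C.card with hc
  -- degrees
  have hdeg : ∀ x : V, (G.neighborFinset x).card ≤ d := by
    intro x
    have := hΔ x
    rwa [Set.ncard_eq_toFinset_card', ← SimpleGraph.neighborFinset_def] at this
  -- decomposition of S
  have hSeq : S = ({u, v} : Finset V) ∪ (K ∪ (L ∪ C)) := by
    ext x
    simp only [hSdef, hKdef, hLdef, hCdef, Finset.mem_union, Finset.mem_sdiff,
      Finset.mem_insert, Finset.mem_singleton, Finset.mem_inter]
    constructor
    · rintro (hx | hx)
      · by_cases h1 : x ∈ Nv
        · exact Or.inr (Or.inr (Or.inr ⟨hx, h1⟩))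
        · by_cases h2 : x = v
          · exact Or.inl (Or.inr h2)
          · exact Or.inr (Or.inl ⟨hx, by simp [h1, h2]⟩)
      · by_cases h1 : x ∈ Nu
        · exact Or.inr (Or.inr (Or.inr ⟨h1, hx⟩))
        · by_cases h2 : x = u
          · exact Or.inl (Or.inl h2)
          · exact Or.inr (Or.inr (Or.inl ⟨hx, by simp [h1, h2]⟩))
    · rintro ((rfl | rfl) | (hx | (hx | hx)))
      · exact Or.inr huNv
      · exact Or.inl hvNu
      · exact Or.inl hx.1
      · exact Or.inr hx.1
      · exact Or.inl hx.1
  have hD1 : Disjoint ({u, v} : Finset V) (K ∪ (L ∪ C)) := by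
    simp only [Finset.disjoint_left, Finset.mem_insert, Finset.mem_singleton]
    rintro x (rfl | rfl) hx <;> simp only [Finset.mem_union] at hx
    · rcases hx with h | h | h
      exacts [huK h, huL h, huC h]
    · rcases hx with h | h | h
      exacts [hvK h, hvL h, hvC h]
  have hD2 : Disjoint K (L ∪ C) := Finset.disjoint_union_right.2 ⟨hKL, hKC⟩
  have hScard : S.card ≤ 2 + (k + (l + c)) := by
    rw [hSeq]
    calc (({u, v} : Finset V) ∪ (K ∪ (L ∪ C))).card
        ≤ ({u, v} : Finset V).card + (K ∪ (L ∪ C)).card := Finset.card_union_le _ _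
      _ ≤ 2 + (k + (l + c)) := by
          gcongr
          · exact le_of_eq (Finset.card_pair hune)
          · calc (K ∪ (L ∪ C)).card ≤ K.card + (L ∪ C).card := Finset.card_union_le _ _
              _ ≤ k + (l + c) := by gcongr; exact Finset.card_union_le _ _
  -- degree constraints
  have hNu_sub : insert v (K ∪ C) ⊆ Nu := by
    intro x hx
    rcases Finset.mem_insert.1 hx with rfl | hx
    · exact hvNu
    · rcases Finset.mem_union.1 hx with hx | hx
      exacts [hKNu x hx, hCNu x hx]
  have hvKC : v ∉ K ∪ C := by
    simp only [Finset.mem_union]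
    rintro (h | h)
    exacts [hvK h, hvC h]
  have hkc1 : k + c + 1 ≤ d := by
    have h1 : (insert v (K ∪ C)).card ≤ Nu.card := Finset.card_le_card hNu_sub
    rw [Finset.card_insert_of_notMem hvKC, Finset.card_union_of_disjoint hKC] at h1
    have h2 : Nu.card ≤ d := by rw [hNu]; exact hdeg u
    omega
  have hNv_sub : insert u (L ∪ C) ⊆ Nv := by
    intro x hx
    rcases Finset.mem_insert.1 hx with rfl | hx
    · exact huNv
    · rcases Finset.mem_union.1 hx with hx | hx
      exacts [hLNv x hx, hCNv x hx]
  have huLC : u ∉ L ∪ C := by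
    simp only [Finset.mem_union]
    rintro (h | h)
    exacts [huL h, huC h]
  have hLCdisj : Disjoint L C := hLC
  have hlc1 : l + c + 1 ≤ d := by
    have h1 : (insert u (L ∪ C)).card ≤ Nv.card := Finset.card_le_card hNv_sub
    rw [Finset.card_insert_of_notMem huLC, Finset.card_union_of_disjoint hLC] at h1
    have h2 : Nv.card ≤ d := by rw [hNv]; exact hdeg v
    omega
  -- cliques from claw-freeness
  have hKclq : ∀ y ∈ K, ∀ y' ∈ K, y ≠ y' → G.Adj y y' := by
    intro y hy y' hy' hne
    refine claw_cons hclaw huv ((memNu y).1 (hKNu y hy)) ((memNu y').1 (hKNu y' hy'))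
      (fun h => hKNv y hy ((memNv y).2 h)) (fun h => hKNv y' hy' ((memNv y').2 h))
      (fun h => hKv y hy h.symm) (fun h => hKv y' hy' h.symm) hne
  have hLclq : ∀ y ∈ L, ∀ y' ∈ L, y ≠ y' → G.Adj y y' := by
    intro y hy y' hy' hne
    refine claw_cons hclaw huv.symm ((memNv y).1 (hLNv y hy)) ((memNv y').1 (hLNv y' hy'))
      (fun h => hLNu y hy ((memNu y).2 h)) (fun h => hLNu y' hy' ((memNu y').2 h))
      (fun h => hLu y hy h.symm) (fun h => hLu y' hy' h.symm) hne
  -- w and the clique Q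
  set w := (K ∪ L).sup (fun y => (C \ G.neighborFinset y).card) with hwdef
  have hwle : ∀ y ∈ K ∪ L, (C \ G.neighborFinset y).card ≤ w := fun y hy =>
    Finset.le_sup (f := fun y => (C \ G.neighborFinset y).card) hy
  obtain ⟨Q, hQsub, hQcard, hQclq⟩ : ∃ Q : Finset V, Q ⊆ C ∧ Q.card = w ∧
      ∀ x ∈ Q, ∀ y ∈ Q, x ≠ y → G.Adj x y := by
    by_cases hne : (K ∪ L).Nonempty
    · obtain ⟨y0, hy0, hw0⟩ := Finset.exists_mem_eq_sup (K ∪ L) hne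
        (fun y => (C \ G.neighborFinset y).card)
      refine ⟨C \ G.neighborFinset y0, Finset.sdiff_subset, hw0.symm, ?_⟩
      intro x hx y hy hxy
      have hxC := (Finset.mem_sdiff.1 hx).1
      have hyC := (Finset.mem_sdiff.1 hy).1
      have hxN : ¬ G.Adj y0 x := fun h =>
        (Finset.mem_sdiff.1 hx).2 ((G.mem_neighborFinset y0 x).2 h)
      have hyN : ¬ G.Adj y0 y := fun h =>
        (Finset.mem_sdiff.1 hy).2 ((G.mem_neighborFinset y0 y).2 h)
      rcases Finset.mem_union.1 hy0 with hy0K | hy0L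
      · refine claw_cons hclaw ((memNu y0).1 (hKNu y0 hy0K)) ((memNu x).1 (hCNu x hxC))
          ((memNu y).1 (hCNu y hyC)) hxN hyN ?_ ?_ hxy
        · exact fun h => hKNv y0 hy0K (h ▸ hCNv x hxC)
        · exact fun h => hKNv y0 hy0K (h ▸ hCNv y hyC)
      · refine claw_cons hclaw ((memNv y0).1 (hLNv y0 hy0L)) ((memNv x).1 (hCNv x hxC))
          ((memNv y).1 (hCNv y hyC)) hxN hyN ?_ ?_ hxy
        · exact fun h => hLNu y0 hy0L (h ▸ hCNu x hxC)
        · exact fun h => hLNu y0 hy0L (h ▸ hCNu y hyC)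
    · rw [Finset.not_nonempty_iff_eq_empty] at hne
      exact ⟨∅, Finset.empty_subset _, by simp [hwdef, hne], by simp⟩
  have hwc : w ≤ c := hQcard ▸ Finset.card_le_card hQsub
  -- edge sets T and W
  set E0 := G.edgeFinset with hE0
  set T := E0.filter (fun f => ∃ x ∈ f, x ∈ S) with hT
  set W := E0.filter (fun f => ∀ x ∈ f, x ∈ S) with hWdef
  -- step 1 : CSet ⊆ T
  have step1 : (CSet G s(u, v)).ncard ≤ T.card := by
    have hsub : CSet G s(u, v) ⊆ (T : Set (Sym2 V)) := by
      rintro f ⟨hfE, a, ha, b, hb, hab⟩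
      have hbS : b ∈ S := by
        rcases Sym2.mem_iff.1 ha with rfl | rfl
        · rcases hab with rfl | hadj
          · exact huS
          · exact Finset.mem_union_left _ ((memNu b).2 hadj)
        · rcases hab with rfl | hadj
          · exact hvS
          · exact Finset.mem_union_right _ ((memNv b).2 hadj)
      exact Finset.mem_coe.2 (Finset.mem_filter.2 ⟨SimpleGraph.mem_edgeFinset.2 hfE, b, hb, hbS⟩)
    calc (CSet G s(u, v)).ncard ≤ (T : Set (Sym2 V)).ncard :=
          Set.ncard_le_ncard hsub (T : Set (Sym2 V)).toFinite
      _ = T.card := Set.ncard_coe_finset T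
  -- step 2 : incidence double counting
  have step2 : T.card + W.card ≤ ∑ x ∈ S, (G.neighborFinset x).card := by
    have e1 : ∀ x : V, (G.neighborFinset x).card = (E0.filter (fun f => x ∈ f)).card := by
      intro x
      rw [SimpleGraph.card_neighborFinset_eq_degree, ← SimpleGraph.card_incidenceFinset_eq_degree,
        SimpleGraph.incidenceFinset_eq_filter]
    calc T.card + W.card
        = ∑ f ∈ E0, ((if ∃ x ∈ f, x ∈ S then 1 else 0) + (if ∀ x ∈ f, x ∈ S then 1 else 0)) := by
          rw [Finset.sum_add_distrib, ← Finset.card_filter, ← Finset.card_filter]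
      _ ≤ ∑ f ∈ E0, (S.filter (fun x => x ∈ f)).card := ?_
      _ = ∑ f ∈ E0, ∑ x ∈ S, (if x ∈ f then 1 else 0) := by
          refine Finset.sum_congr rfl fun f _ => ?_
          rw [Finset.card_filter]
      _ = ∑ x ∈ S, ∑ f ∈ E0, (if x ∈ f then 1 else 0) := Finset.sum_comm
      _ = ∑ x ∈ S, (G.neighborFinset x).card := by
          refine Finset.sum_congr rfl fun x _ => ?_
          rw [e1 x, Finset.card_filter]
    refine Finset.sum_le_sum ?_
    intro f hf
    induction f using Sym2.ind with
    | _ a b =>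
      have hab : G.Adj a b := (SimpleGraph.mem_edgeSet G).1 (SimpleGraph.mem_edgeFinset.1 hf)
      have hne : a ≠ b := hab.ne
      by_cases hall : ∀ x ∈ (s(a, b) : Sym2 V), x ∈ S
      · have haS : a ∈ S := hall a (Sym2.mem_mk_left a b)
        have hbS : b ∈ S := hall b (Sym2.mem_mk_right a b)
        have hsub2 : ({a, b} : Finset V) ⊆ S.filter (fun x => x ∈ (s(a,b) : Sym2 V)) := by
          intro x hx
          rcases Finset.mem_insert.1 hx with rfl | hx
          · exact Finset.mem_filter.2 ⟨haS, Sym2.mem_mk_left _ _⟩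
          · rw [Finset.mem_singleton] at hx; subst hx
            exact Finset.mem_filter.2 ⟨hbS, Sym2.mem_mk_right _ _⟩
        have h2 : 2 ≤ (S.filter (fun x => x ∈ (s(a,b) : Sym2 V))).card := by
          calc 2 = ({a, b} : Finset V).card := (Finset.card_pair hne).symm
            _ ≤ _ := Finset.card_le_card hsub2
        have hex : ∃ x ∈ (s(a,b) : Sym2 V), x ∈ S := ⟨a, Sym2.mem_mk_left a b, haS⟩
        simp only [if_pos hall, if_pos hex]
        omega
      · by_cases hex : ∃ x ∈ (s(a,b) : Sym2 V), x ∈ S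
        · obtain ⟨x, hxf, hxS⟩ := hex
          have hpos : 0 < (S.filter (fun y => y ∈ (s(a,b) : Sym2 V))).card :=
            Finset.card_pos.2 ⟨x, Finset.mem_filter.2 ⟨hxS, hxf⟩⟩
          simp only [if_neg hall, add_zero]
          rw [if_pos ⟨x, hxf, hxS⟩]
          omega
        · simp only [if_neg hall, if_neg hex]
          omega
  -- step 3
  have step3 : ∑ x ∈ S, (G.neighborFinset x).card ≤ (2 + (k + (l + c))) * d := by
    calc ∑ x ∈ S, (G.neighborFinset x).card ≤ ∑ _x ∈ S, d := Finset.sum_le_sum fun x _ => hdeg x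
      _ = S.card * d := by rw [Finset.sum_const, smul_eq_mul]
      _ ≤ (2 + (k + (l + c))) * d := Nat.mul_le_mul_right d hScard
  -- the induced subgraph on S
  let G' : SimpleGraph V :=
    { Adj := fun x y => x ∈ S ∧ y ∈ S ∧ G.Adj x y
      symm := ⟨fun x y h => ⟨h.2.1, h.1, h.2.2.symm⟩⟩
      loopless := ⟨fun x h => G.irrefl h.2.2⟩ }
  have hG'adj : ∀ x y : V, G'.Adj x y ↔ (x ∈ S ∧ y ∈ S ∧ G.Adj x y) := fun x y => Iff.rfl
  have hWG' : W = G'.edgeFinset := by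
    ext f
    induction f using Sym2.ind with
    | _ a b =>
      rw [SimpleGraph.mem_edgeFinset, SimpleGraph.mem_edgeSet, hG'adj]
      simp only [hWdef, Finset.mem_filter, SimpleGraph.mem_edgeFinset, SimpleGraph.mem_edgeSet, hE0]
      constructor
      · rintro ⟨hab, hall⟩
        exact ⟨hall a (Sym2.mem_mk_left a b), hall b (Sym2.mem_mk_right a b), hab⟩
      · rintro ⟨haS, hbS, hab⟩
        refine ⟨hab, ?_⟩
        intro x hx
        rcases Sym2.mem_iff.1 hx with rfl | rfl
        exacts [haS, hbS]
  have hdouble : ∑ x : V, G'.degree x = 2 * W.card := by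
    rw [hWG']
    exact G'.sum_degrees_eq_twice_card_edges
  have hSuniv : ∑ x ∈ S, G'.degree x ≤ ∑ x : V, G'.degree x :=
    Finset.sum_le_sum_of_subset (Finset.subset_univ S)
  have hnbr : ∀ (x : V) (R : Finset V), (∀ y ∈ R, G'.Adj x y) → R.card ≤ G'.degree x := by
    intro x R hR
    rw [← SimpleGraph.card_neighborFinset_eq_degree]
    refine Finset.card_le_card fun y hy => ?_
    rw [SimpleGraph.mem_neighborFinset]
    exact hR y hy
  -- per-class degree bounds
  have bU : 1 + (k + c) ≤ G'.degree u := by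
    have hcard : (insert v (K ∪ C)).card = 1 + (k + c) := by
      rw [Finset.card_insert_of_notMem hvKC, Finset.card_union_of_disjoint hKC]
      omega
    rw [← hcard]
    refine hnbr u _ ?_
    intro y hy
    rcases Finset.mem_insert.1 hy with rfl | hy
    · exact ⟨huS, hvS, huv⟩
    · rcases Finset.mem_union.1 hy with h | h
      · exact ⟨huS, hKS h, (memNu y).1 (hKNu y h)⟩
      · exact ⟨huS, hCS h, (memNu y).1 (hCNu y h)⟩
  have bV : 1 + (l + c) ≤ G'.degree v := by
    have hcard : (insert u (L ∪ C)).card = 1 + (l + c) := by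
      rw [Finset.card_insert_of_notMem huLC, Finset.card_union_of_disjoint hLC]
      omega
    rw [← hcard]
    refine hnbr v _ ?_
    intro y hy
    rcases Finset.mem_insert.1 hy with rfl | hy
    · exact ⟨hvS, huS, huv.symm⟩
    · rcases Finset.mem_union.1 hy with h | h
      · exact ⟨hvS, hLS h, (memNv y).1 (hLNv y h)⟩
      · exact ⟨hvS, hCS h, (memNv y).1 (hCNv y h)⟩
  have bK : ∀ y ∈ K, k + c ≤ G'.degree y + w := by
    intro y hy
    have hyu : G.Adj u y := (memNu y).1 (hKNu y hy)
    have h1 : (C ∩ G.neighborFinset y).card + (C \ G.neighborFinset y).card = c :=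
      Finset.card_inter_add_card_sdiff C (G.neighborFinset y)
    have h2 : (C \ G.neighborFinset y).card ≤ w := hwle y (Finset.mem_union_left _ hy)
    have huKC : u ∉ K.erase y ∪ (C ∩ G.neighborFinset y) := by
      simp only [Finset.mem_union, Finset.mem_erase, Finset.mem_inter]
      rintro (⟨-, h⟩ | ⟨h, -⟩)
      exacts [huK h, huC h]
    have hdisj2 : Disjoint (K.erase y) (C ∩ G.neighborFinset y) :=
      (hKC.mono_left (Finset.erase_subset y K)).mono_right Finset.inter_subset_left
    have hcard : (insert u (K.erase y ∪ (C ∩ G.neighborFinset y))).card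
        = 1 + ((K.erase y).card + (C ∩ G.neighborFinset y).card) := by
      rw [Finset.card_insert_of_notMem huKC, Finset.card_union_of_disjoint hdisj2]
      omega
    have herase : (K.erase y).card + 1 = k := Finset.card_erase_add_one hy
    have hb : (insert u (K.erase y ∪ (C ∩ G.neighborFinset y))).card ≤ G'.degree y := by
      refine hnbr y _ ?_
      intro z hz
      rcases Finset.mem_insert.1 hz with rfl | hz
      · exact ⟨hKS hy, huS, hyu.symm⟩
      · rcases Finset.mem_union.1 hz with h | h
        · have hzy := Finset.mem_erase.1 h
          exact ⟨hKS hy, hKS hzy.2, hKclq y hy z hzy.2 (fun e => hzy.1 e.symm)⟩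
        · have hzC := Finset.mem_inter.1 h
          exact ⟨hKS hy, hCS hzC.1, (G.mem_neighborFinset y z).1 hzC.2⟩
    omega
  have bL : ∀ y ∈ L, l + c ≤ G'.degree y + w := by
    intro y hy
    have hyv : G.Adj v y := (memNv y).1 (hLNv y hy)
    have h1 : (C ∩ G.neighborFinset y).card + (C \ G.neighborFinset y).card = c :=
      Finset.card_inter_add_card_sdiff C (G.neighborFinset y)
    have h2 : (C \ G.neighborFinset y).card ≤ w := hwle y (Finset.mem_union_right _ hy)
    have hvLC : v ∉ L.erase y ∪ (C ∩ G.neighborFinset y) := by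
      simp only [Finset.mem_union, Finset.mem_erase, Finset.mem_inter]
      rintro (⟨-, h⟩ | ⟨h, -⟩)
      exacts [hvL h, hvC h]
    have hdisj2 : Disjoint (L.erase y) (C ∩ G.neighborFinset y) :=
      (hLC.mono_left (Finset.erase_subset y L)).mono_right Finset.inter_subset_left
    have hcard : (insert v (L.erase y ∪ (C ∩ G.neighborFinset y))).card
        = 1 + ((L.erase y).card + (C ∩ G.neighborFinset y).card) := by
      rw [Finset.card_insert_of_notMem hvLC, Finset.card_union_of_disjoint hdisj2]
      omega
    have herase : (L.erase y).card + 1 = l := Finset.card_erase_add_one hy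
    have hb : (insert v (L.erase y ∪ (C ∩ G.neighborFinset y))).card ≤ G'.degree y := by
      refine hnbr y _ ?_
      intro z hz
      rcases Finset.mem_insert.1 hz with rfl | hz
      · exact ⟨hLS hy, hvS, hyv.symm⟩
      · rcases Finset.mem_union.1 hz with h | h
        · have hzy := Finset.mem_erase.1 h
          exact ⟨hLS hy, hLS hzy.2, hLclq y hy z hzy.2 (fun e => hzy.1 e.symm)⟩
        · have hzC := Finset.mem_inter.1 h
          exact ⟨hLS hy, hCS hzC.1, (G.mem_neighborFinset y z).1 hzC.2⟩
    omega
  have hQ1 : ∀ x ∈ Q, w + 1 ≤ G'.degree x := by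
    intro x hx
    have hxC := hQsub hx
    have hvQ : v ∉ Q.erase x := fun h => hvC (hQsub (Finset.mem_of_mem_erase h))
    have huQ : u ∉ insert v (Q.erase x) := by
      simp only [Finset.mem_insert]
      rintro (rfl | h)
      exacts [hune rfl, huC (hQsub (Finset.mem_of_mem_erase h))]
    have hcard : (insert u (insert v (Q.erase x))).card = (Q.erase x).card + 2 := by
      rw [Finset.card_insert_of_notMem huQ, Finset.card_insert_of_notMem hvQ]
    have herase : (Q.erase x).card + 1 = w := by
      rw [← hQcard]; exact Finset.card_erase_add_one hx
    have hb : (insert u (insert v (Q.erase x))).card ≤ G'.degree x := by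
      refine hnbr x _ ?_
      intro z hz
      rcases Finset.mem_insert.1 hz with rfl | hz
      · exact ⟨hCS hxC, huS, ((memNu x).1 (hCNu x hxC)).symm⟩
      · rcases Finset.mem_insert.1 hz with rfl | hz
        · exact ⟨hCS hxC, hvS, ((memNv x).1 (hCNv x hxC)).symm⟩
        · have h' := Finset.mem_erase.1 hz
          exact ⟨hCS hxC, hCS (hQsub h'.2), hQclq x hx z h'.2 (fun e => h'.1 e.symm)⟩
    omega
  have hC2 : ∀ x ∈ C, 2 ≤ G'.degree x := by
    intro x hx
    have hb : ({u, v} : Finset V).card ≤ G'.degree x := by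
      refine hnbr x _ ?_
      intro z hz
      rcases Finset.mem_insert.1 hz with rfl | hz
      · exact ⟨hCS hx, huS, ((memNu x).1 (hCNu x hx)).symm⟩
      · rw [Finset.mem_singleton] at hz; subst hz
        exact ⟨hCS hx, hvS, ((memNv x).1 (hCNv x hx)).symm⟩
    rwa [Finset.card_pair hune] at hb
  have bC : (C \ Q).card * 2 + w * (w + 1) ≤ ∑ x ∈ C, G'.degree x := by
    rw [← Finset.sum_sdiff hQsub]
    have h1 : (C \ Q).card * 2 = ∑ _x ∈ C \ Q, 2 := by rw [Finset.sum_const, smul_eq_mul]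
    have h2 : w * (w + 1) = ∑ _x ∈ Q, (w + 1) := by rw [Finset.sum_const, smul_eq_mul, hQcard]
    rw [h1, h2]
    exact Nat.add_le_add (Finset.sum_le_sum fun x hx => hC2 x (Finset.mem_sdiff.1 hx).1)
      (Finset.sum_le_sum fun x hx => hQ1 x hx)
  have hcqw : (C \ Q).card + w = c := by
    rw [← hQcard]; exact Finset.card_sdiff_add_card_eq_card hQsub
  have bKsum : k * (k + c) ≤ (∑ y ∈ K, G'.degree y) + k * w := by
    have h1 : ∑ _y ∈ K, (k + c) ≤ ∑ y ∈ K, (G'.degree y + w) :=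
      Finset.sum_le_sum fun y hy => bK y hy
    rw [Finset.sum_const, smul_eq_mul, Finset.sum_add_distrib, Finset.sum_const, smul_eq_mul] at h1
    exact h1
  have bLsum : l * (l + c) ≤ (∑ y ∈ L, G'.degree y) + l * w := by
    have h1 : ∑ _y ∈ L, (l + c) ≤ ∑ y ∈ L, (G'.degree y + w) :=
      Finset.sum_le_sum fun y hy => bL y hy
    rw [Finset.sum_const, smul_eq_mul, Finset.sum_add_distrib, Finset.sum_const, smul_eq_mul] at h1
    exact h1
  have hsplit : ∑ x ∈ S, G'.degree x =
      G'.degree u + G'.degree v + ((∑ y ∈ K, G'.degree y) + ((∑ y ∈ L, G'.degree y)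
        + ∑ x ∈ C, G'.degree x)) := by
    simp only [hSeq]
    rw [Finset.sum_union hD1, Finset.sum_union hD2, Finset.sum_union hLC,
      Finset.sum_pair hune]
  have hA3 : G'.degree u + G'.degree v + ((∑ y ∈ K, G'.degree y) + ((∑ y ∈ L, G'.degree y)
      + ∑ x ∈ C, G'.degree x)) ≤ 2 * W.card := by
    rw [← hsplit, ← hdouble]
    exact hSuniv
  -- conclusion
  have h1 : T.card + W.card ≤ (2 + (k + (l + c))) * d := le_trans step2 step3
  have cast1 : ((CSet G s(u,v)).ncard : ℝ) ≤ (T.card : ℝ) := Nat.cast_le.2 step1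
  refine le_trans cast1 ?_
  refine my_arith (d : ℝ) k l c w (T.card) (W.card) (G'.degree u) (G'.degree v)
    (∑ y ∈ K, G'.degree y) (∑ y ∈ L, G'.degree y) (∑ x ∈ C, G'.degree x) ((C \ Q).card)
    ?_ ?_ ?_ ?_ ?_ ?_ ?_ ?_ ?_ ?_ (Nat.cast_nonneg k) (Nat.cast_nonneg l)
    (Nat.cast_nonneg _) (Nat.cast_nonneg w) (by exact_mod_cast hd)
  · have := (Nat.cast_le (α := ℝ)).2 h1
    push_cast at this
    linarith
  · have := (Nat.cast_le (α := ℝ)).2 hA3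
    push_cast at this
    linarith
  · have := (Nat.cast_le (α := ℝ)).2 bU
    push_cast at this
    linarith
  · have := (Nat.cast_le (α := ℝ)).2 bV
    push_cast at this
    linarith
  · have := (Nat.cast_le (α := ℝ)).2 bKsum
    push_cast at this
    linarith
  · have := (Nat.cast_le (α := ℝ)).2 bLsum
    push_cast at this
    linarith
  · have := (Nat.cast_le (α := ℝ)).2 bC
    push_cast at this
    linarith
  · exact_mod_cast congrArg (Nat.cast (R := ℝ)) hcqw
  · have := (Nat.cast_le (α := ℝ)).2 hkc1
    push_cast at this
    linarith
  · have := (Nat.cast_le (α := ℝ)).2 hlc1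
    push_cast at this
    linarith

/-- maximal induced matchings in claw-free graphs. -/
theorem stmt12 [Fintype V] (G : SimpleGraph V) (d : ℕ) (hd : 3 ≤ d)
    (hΔ : ∀ v : V, (G.neighborSet v).ncard ≤ d) (hclaw : ClawFree G)
    (M : Set (Sym2 V)) (hmax : IsMaximalInducedMatching G M) :
    (M.ncard : ℝ) ≥ (G.edgeSet.ncard : ℝ) / ((7 / 6) * (d : ℝ) ^ 2 + (d : ℝ)) := by
  classical
  have hd3 : (3:ℝ) ≤ (d:ℝ) := by exact_mod_cast hd
  have hB : (0:ℝ) < 7 / 6 * (d:ℝ)^2 + (d:ℝ) := by nlinarith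
  rw [ge_iff_le, div_le_iff₀ hB]
  have hMfin : M.Finite := Set.toFinite M
  have hkey : ∀ f : Sym2 V, f ∈ G.edgeSet →
      (((Set.toFinite (CSet G f)).toFinset).card : ℝ) ≤ 7 / 6 * (d:ℝ)^2 + (d:ℝ) := by
    intro f
    induction f using Sym2.ind with
    | _ a b =>
      intro hfE
      have hab : G.Adj a b := (SimpleGraph.mem_edgeSet G).1 hfE
      have h := key G d hd hΔ hclaw hab
      rwa [Set.ncard_eq_toFinset_card (CSet G s(a, b)) (Set.toFinite _)] at h
  have hcover : G.edgeFinset ⊆ hMfin.toFinset.biUnion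
      (fun e => (Set.toFinite (CSet G e)).toFinset) := by
    intro f hf
    obtain ⟨e, heM, hfe⟩ := coverage hmax (SimpleGraph.mem_edgeFinset.1 hf)
    exact Finset.mem_biUnion.2 ⟨e, hMfin.mem_toFinset.2 heM, (Set.Finite.mem_toFinset _).2 hfe⟩
  have hcard : G.edgeFinset.card ≤
      ∑ e ∈ hMfin.toFinset, ((Set.toFinite (CSet G e)).toFinset).card :=
    le_trans (Finset.card_le_card hcover) Finset.card_biUnion_le
  have h2 : (G.edgeFinset.card : ℝ) ≤ (hMfin.toFinset.card : ℝ) * (7 / 6 * (d:ℝ)^2 + (d:ℝ)) := by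
    calc (G.edgeFinset.card : ℝ)
        ≤ ∑ e ∈ hMfin.toFinset, (((Set.toFinite (CSet G e)).toFinset).card : ℝ) := by
          exact_mod_cast hcard
      _ ≤ ∑ e ∈ hMfin.toFinset, (7 / 6 * (d:ℝ)^2 + (d:ℝ)) := by
          refine Finset.sum_le_sum fun e he => ?_
          exact hkey e (hmax.1.1 (hMfin.mem_toFinset.1 he))
      _ = hMfin.toFinset.card * (7 / 6 * (d:ℝ)^2 + (d:ℝ)) := by
          rw [Finset.sum_const, nsmul_eq_mul]
  have e1 : G.edgeSet.ncard = G.edgeFinset.card := by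
    rw [← SimpleGraph.coe_edgeFinset, Set.ncard_coe_finset]
  have e2 : M.ncard = hMfin.toFinset.card := Set.ncard_eq_toFinset_card M hMfin
  rw [e1, e2]
  exact h2
end
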